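/- arXiv:1703.08203 — 3 statements merged into one kernel-verified Lean document; each statement's English description precedes it below -/
import Mathlib

section
/- Let R be a ring that is linearly topologized, Hausdorff and complete, and let 𝔪 be a closed ideal of R such that every element of 𝔪 is topologically nilpotent. Let f = (f₁,…,fₙ) be an n-tuple of restricted power series in R⟨X₁,…,Xₙ⟩ with Jacobian determinant J. If f(0) ∈ 𝔪ⁿ and J(0) is a unit of R, then the map x ↦ f(x) is a bijection of 𝔪ⁿ onto itself. -/
open Filter

/-- Evaluation of a (restricted) multivariate power series at a point, as the sum of
its monomials' values. -/
noncomputable def evalRestricted {R : Type*} [CommRing R] [UniformSpace R]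
    {n : ℕ} (φ : MvPowerSeries (Fin n) R) (a : Fin n → R) : R :=
  ∑' d : Fin n →₀ ℕ, MvPowerSeries.coeff d φ * ∏ i, a i ^ d i

section Algebra

variable {S : Type*} [CommRing S]

/-- difference of products is in an ideal containing the entrywise differences -/
lemma prod_sub_prod_mem_aux {ι : Type*} (J : Ideal S) (s : Finset ι) (a b : ι → S)
    (h : ∀ i ∈ s, a i - b i ∈ J) : (∏ i ∈ s, a i) - ∏ i ∈ s, b i ∈ J := by
  classical
  induction s using Finset.induction with
  | empty => simp
  | insert k s hk ih =>
    rw [Finset.prod_insert hk, Finset.prod_insert hk]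
    have : a k * ∏ i ∈ s, a i - b k * ∏ i ∈ s, b i
        = a k * ((∏ i ∈ s, a i) - ∏ i ∈ s, b i) + (a k - b k) * ∏ i ∈ s, b i := by ring
    rw [this]
    exact J.add_mem (J.mul_mem_left _ (ih fun i hi => h i (Finset.mem_insert_of_mem hi)))
      (J.mul_mem_right _ (h k (Finset.mem_insert_self k s)))

lemma pow_sub_pow_mem (J : Ideal S) {a b : S} (h : a - b ∈ J) (k : ℕ) : a ^ k - b ^ k ∈ J := by
  obtain ⟨c, hc⟩ := sub_dvd_pow_sub_pow a b k
  rw [hc]; exact J.mul_mem_right _ h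

/-- L1: difference of monomials as combination of coordinate differences -/
lemma exists_comb {ι : Type*} (s : Finset ι) (d : ι → ℕ) (x x' : ι → S) :
    ∃ c : ι → S, (∏ i ∈ s, x i ^ d i) - ∏ i ∈ s, x' i ^ d i
      = ∑ j ∈ s, c j * (x j - x' j) := by
  classical
  induction s using Finset.induction with
  | empty => exact ⟨0, by simp⟩
  | insert k s hk ih =>
    obtain ⟨c, hc⟩ := ih
    obtain ⟨g, hg⟩ := sub_dvd_pow_sub_pow (x k) (x' k) (d k)
    refine ⟨fun j => if j = k then g * ∏ i ∈ s, x' i ^ d i else x k ^ d k * c j, ?_⟩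
    rw [Finset.prod_insert hk, Finset.prod_insert hk, Finset.sum_insert hk]
    have h1 : ∑ j ∈ s, (if j = k then g * ∏ i ∈ s, x' i ^ d i else x k ^ d k * c j) * (x j - x' j)
        = x k ^ d k * ∑ j ∈ s, c j * (x j - x' j) := by
      rw [Finset.mul_sum]
      refine Finset.sum_congr rfl fun j hj => ?_
      have : j ≠ k := fun h => hk (h ▸ hj)
      simp only [if_neg this]; ring
    rw [h1, ← hc]
    simp only [if_pos rfl, if_true]
    have : x k ^ d k * ∏ i ∈ s, x i ^ d i - x' k ^ d k * ∏ i ∈ s, x' i ^ d i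
        = x k ^ d k * ((∏ i ∈ s, x i ^ d i) - ∏ i ∈ s, x' i ^ d i)
          + (x k ^ d k - x' k ^ d k) * ∏ i ∈ s, x' i ^ d i := by ring
    rw [this, hg]; ring

lemma prod_pow_mem {ι : Type*} [Fintype ι] (J : Ideal S) (d : ι → ℕ) (a : ι → S)
    {j : ι} (hd : d j ≠ 0) (ha : a j ∈ J) : (∏ i, a i ^ d i) ∈ J := by
  classical
  rw [← Finset.mul_prod_erase Finset.univ _ (Finset.mem_univ j)]
  obtain ⟨k, hk⟩ := Nat.exists_eq_succ_of_ne_zero hd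
  rw [hk, pow_succ]
  exact J.mul_mem_right _ (J.mul_mem_left _ ha)

end Algebra

section Mono
variable {S : Type*} [CommRing S] {ι : Type*} [Fintype ι] [DecidableEq ι]

lemma exists_comb_mem (d : ι →₀ ℕ) (x x' : ι → S) :
    ∃ c : ι → S, ((∏ i, x i ^ d i) - ∏ i, x' i ^ d i = ∑ j, c j * (x j - x' j)) ∧
      ∀ j, c j - (if d = Finsupp.single j 1 then 1 else 0)
        ∈ Ideal.span (Set.range x ∪ Set.range x') := by
  set 𝔞 := Ideal.span (Set.range x ∪ Set.range x') with h𝔞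
  have hx : ∀ j, x j ∈ 𝔞 := fun j => Ideal.subset_span (Or.inl ⟨j, rfl⟩)
  have hx' : ∀ j, x' j ∈ 𝔞 := fun j => Ideal.subset_span (Or.inr ⟨j, rfl⟩)
  match hN : ∑ i, d i with
  | 0 =>
    have hd : ∀ i, d i = 0 := by
      intro i
      exact (Finset.sum_eq_zero_iff.1 hN) i (Finset.mem_univ i)
    refine ⟨0, by simp [hd], fun j => ?_⟩
    have : d ≠ Finsupp.single j 1 := by
      intro h
      have := hd j
      rw [h, Finsupp.single_eq_same] at this
      exact one_ne_zero this
    simp [this]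
  | 1 =>
    have hne : ∃ j₀, d j₀ ≠ 0 := by
      by_contra h
      push_neg at h
      simp [h] at hN
    obtain ⟨j₀, hj₀⟩ := hne
    have hle : d j₀ ≤ 1 := hN ▸ Finset.single_le_sum (fun i _ => Nat.zero_le _) (Finset.mem_univ j₀)
    have hdj₀ : d j₀ = 1 := le_antisymm hle (Nat.one_le_iff_ne_zero.2 hj₀)
    have hother : ∀ i, i ≠ j₀ → d i = 0 := by
      intro i hi
      have hsplit : d j₀ + ∑ k ∈ Finset.univ.erase j₀, d k = 1 := by
        rw [Finset.add_sum_erase _ _ (Finset.mem_univ j₀)]; exact hN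
      rw [hdj₀] at hsplit
      have : ∑ k ∈ Finset.univ.erase j₀, d k = 0 := by omega
      exact (Finset.sum_eq_zero_iff.1 this) i (Finset.mem_erase.2 ⟨hi, Finset.mem_univ i⟩)
    have hdeq : d = Finsupp.single j₀ 1 := by
      ext i
      rcases eq_or_ne i j₀ with rfl | hi
      · simp [hdj₀]
      · simp [hother i hi, Finsupp.single_eq_of_ne' (Ne.symm hi)]
    have hprod : ∀ y : ι → S, ∏ i, y i ^ d i = y j₀ := by
      intro y
      rw [← Finset.mul_prod_erase Finset.univ _ (Finset.mem_univ j₀), hdj₀, pow_one]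
      have : ∏ i ∈ Finset.univ.erase j₀, y i ^ d i = 1 :=
        Finset.prod_eq_one fun i hi => by rw [hother i (Finset.mem_erase.1 hi).1, pow_zero]
      rw [this, mul_one]
    refine ⟨fun j => if j = j₀ then 1 else 0, ?_, fun j => ?_⟩
    · rw [hprod x, hprod x']
      rw [Finset.sum_eq_single j₀ (fun j _ hj => by simp [hj]) (by simp)]
      simp
    · rcases eq_or_ne j j₀ with rfl | hj
      · simp [hdeq]
      · have : d ≠ Finsupp.single j 1 := by
          rw [hdeq]
          intro h
          have := DFunLike.congr_fun h j₀
          rw [Finsupp.single_eq_same, Finsupp.single_eq_of_ne' hj] at this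
          exact one_ne_zero this
        simp [hj, this]
  | (N + 2) =>
    have hne : ∃ j₀, d j₀ ≠ 0 := by
      by_contra h
      push_neg at h
      simp [h] at hN
    obtain ⟨j₀, hj₀⟩ := hne
    set d' : ι → ℕ := Function.update (⇑d) j₀ (d j₀ - 1) with hd'
    have hsplit : ∀ y : ι → S, ∏ i, y i ^ d i = y j₀ * ∏ i, y i ^ d' i := by
      intro y
      rw [← Finset.mul_prod_erase Finset.univ (fun i => y i ^ d i) (Finset.mem_univ j₀),
        ← Finset.mul_prod_erase Finset.univ (fun i => y i ^ d' i) (Finset.mem_univ j₀)]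
      have h1 : ∏ i ∈ Finset.univ.erase j₀, y i ^ d i = ∏ i ∈ Finset.univ.erase j₀, y i ^ d' i :=
        Finset.prod_congr rfl fun i hi => by
          rw [hd', Function.update_of_ne (Finset.mem_erase.1 hi).1]
      have h2 : y j₀ ^ d j₀ = y j₀ * y j₀ ^ d' j₀ := by
        rw [hd', Function.update_self, ← pow_succ']
        congr 1
        omega
      rw [h1, h2, mul_assoc]
    have hd'sum : ∃ j₁, d' j₁ ≠ 0 := by
      by_contra h
      push_neg at h
      have : ∀ i, d i = if i = j₀ then 1 else 0 := by
        intro i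
        rcases eq_or_ne i j₀ with rfl | hi
        · have h0 := h i
          rw [hd', Function.update_self] at h0
          simp only [if_pos rfl, if_true]
          omega
        · have := h i
          rw [hd', Function.update_of_ne hi] at this
          simp [hi, this]
      have hsum1 : ∑ i, d i = 1 := by
        rw [Finset.sum_congr rfl fun i _ => this i]
        simp
      omega
    obtain ⟨j₁, hj₁⟩ := hd'sum
    obtain ⟨c', hc'⟩ := exists_comb Finset.univ d' x x'
    have hprodmem : (∏ i, x' i ^ d' i) ∈ 𝔞 := prod_pow_mem 𝔞 d' x' hj₁ (hx' j₁)
    refine ⟨fun j => x j₀ * c' j + (if j = j₀ then ∏ i, x' i ^ d' i else 0), ?_, fun j => ?_⟩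
    · have hrhs : ∑ j, (x j₀ * c' j + (if j = j₀ then ∏ i, x' i ^ d' i else 0)) * (x j - x' j)
          = x j₀ * ∑ j, c' j * (x j - x' j) + (x j₀ - x' j₀) * ∏ i, x' i ^ d' i := by
        simp only [add_mul, Finset.sum_add_distrib]
        congr 1
        · rw [Finset.mul_sum]; exact Finset.sum_congr rfl fun j _ => by ring
        · rw [Finset.sum_eq_single j₀ (fun j _ hj => by simp [hj]) (by simp)]
          simp only [if_pos rfl, if_true]
          ring
      simp only []
      rw [hsplit x, hsplit x', hrhs, ← hc']
      ring
    · have hd1 : d ≠ Finsupp.single j 1 := by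
        intro h
        rw [h] at hN
        have : ∑ i, (Finsupp.single j 1 : ι →₀ ℕ) i = 1 := by
          rw [Finset.sum_eq_single j (fun i _ hi => Finsupp.single_eq_of_ne' (Ne.symm hi))
            (by simp)]
          simp
        omega
      rw [if_neg hd1, sub_zero]
      refine Ideal.add_mem _ (Ideal.mul_mem_right _ _ (hx j₀)) ?_
      split
      · exact hprodmem
      · exact Ideal.zero_mem _
end Mono

section Core
variable {S : Type*} [CommRing S] {n : ℕ}

open MvPolynomial

/-- Taylor-type expansion: difference of polynomial evaluations as a linear combination of
coordinate differences, with coefficients congruent to the linear coefficients. -/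
lemma poly_taylor (g : MvPolynomial (Fin n) S) (x x' : Fin n → S) :
    ∃ c : Fin n → S,
      (MvPolynomial.eval x g - MvPolynomial.eval x' g = ∑ j, c j * (x j - x' j)) ∧
      ∀ j, c j - MvPolynomial.coeff (Finsupp.single j 1) g
        ∈ Ideal.span (Set.range x ∪ Set.range x') := by
  classical
  set 𝔞 := Ideal.span (Set.range x ∪ Set.range x') with h𝔞
  choose c hc hcm using fun d : Fin n →₀ ℕ => exists_comb_mem d x x'
  refine ⟨fun j => ∑ d ∈ g.support, MvPolynomial.coeff d g * c d j, ?_, ?_⟩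
  · have he : ∀ y : Fin n → S, MvPolynomial.eval y g
        = ∑ d ∈ g.support, MvPolynomial.coeff d g * ∏ i, y i ^ d i := by
      intro y
      rw [MvPolynomial.eval_eq]
      refine Finset.sum_congr rfl fun d _ => ?_
      congr 1
      rw [← Finsupp.prod_pow d y]
      exact (Finsupp.prod_of_support_subset d (le_refl _) _
        (fun i _ => pow_zero (y i))).symm
    rw [he x, he x', ← Finset.sum_sub_distrib]
    have : ∀ d ∈ g.support, MvPolynomial.coeff d g * ∏ i, x i ^ d i
        - MvPolynomial.coeff d g * ∏ i, x' i ^ d i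
        = ∑ j, MvPolynomial.coeff d g * c d j * (x j - x' j) := by
      intro d _
      rw [← mul_sub, hc d, Finset.mul_sum]
      exact Finset.sum_congr rfl fun j _ => by ring
    rw [Finset.sum_congr rfl this, Finset.sum_comm]
    exact Finset.sum_congr rfl fun j _ => by rw [Finset.sum_mul]
  · intro j
    have h1 : ∑ d ∈ g.support, MvPolynomial.coeff d g
        * (if d = Finsupp.single j 1 then (1:S) else 0)
        = MvPolynomial.coeff (Finsupp.single j 1) g := by
      rw [Finset.sum_congr rfl (fun d _ => by rw [mul_ite, mul_one, mul_zero])]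
      rw [Finset.sum_ite_eq' g.support (Finsupp.single j 1) (fun d => MvPolynomial.coeff d g)]
      split
      · rfl
      · next h => exact (MvPolynomial.notMem_support_iff.1 h).symm
    have h2 : (∑ d ∈ g.support, MvPolynomial.coeff d g * c d j)
          - MvPolynomial.coeff (Finsupp.single j 1) g
        = ∑ d ∈ g.support, MvPolynomial.coeff d g
            * (c d j - (if d = Finsupp.single j 1 then 1 else 0)) := by
      rw [Finset.sum_congr rfl (fun d _ => mul_sub (MvPolynomial.coeff d g) _ _),
        Finset.sum_sub_distrib, h1]
    simp only []
    rw [h2]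
    exact Ideal.sum_mem _ fun d _ => Ideal.mul_mem_left _ _ (hcm d j)

end Core

section Core2
variable {S : Type*} [CommRing S] {n : ℕ}

lemma span_finset_nilpotent (s : Finset S) (h : ∀ a ∈ s, IsNilpotent a) :
    ∃ N : ℕ, (Ideal.span (s : Set S)) ^ N = ⊥ := by
  classical
  induction s using Finset.induction with
  | empty => exact ⟨1, by simp⟩
  | insert a s ha ih =>
    obtain ⟨N, hN⟩ := ih fun b hb => h b (Finset.mem_insert_of_mem hb)
    obtain ⟨k, hk⟩ := h a (Finset.mem_insert_self a s)
    refine ⟨k + N, ?_⟩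
    rw [Finset.coe_insert, Ideal.span_insert]
    refine le_bot_iff.1 (le_trans Ideal.sup_pow_add_le_pow_sup_pow ?_)
    rw [Ideal.span_singleton_pow, hk, hN]
    simp [Ideal.span_singleton_eq_bot.2 rfl]

lemma det_sub_det_mem (J : Ideal S) (M A : Matrix (Fin n) (Fin n) S)
    (h : ∀ i j, M i j - A i j ∈ J) : M.det - A.det ∈ J := by
  classical
  rw [Matrix.det_apply', Matrix.det_apply', ← Finset.sum_sub_distrib]
  refine Ideal.sum_mem _ fun σ _ => ?_
  rw [← mul_sub]
  exact Ideal.mul_mem_left _ _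
    (prod_sub_prod_mem_aux J Finset.univ _ _ fun i _ => h (σ i) i)

/-- Injectivity modulo nilpotents -/
lemma core_inj (g : Fin n → MvPolynomial (Fin n) S)
    (hA : IsUnit (Matrix.det (Matrix.of fun i j =>
      MvPolynomial.coeff (Finsupp.single j 1) (g i))))
    (x x' : Fin n → S) (hx : ∀ i, IsNilpotent (x i)) (hx' : ∀ i, IsNilpotent (x' i))
    (h : ∀ i, MvPolynomial.eval x (g i) = MvPolynomial.eval x' (g i)) : x = x' := by
  classical
  choose c hc hcm using fun i => poly_taylor (g i) x x'
  set A : Matrix (Fin n) (Fin n) S :=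
    Matrix.of fun i j => MvPolynomial.coeff (Finsupp.single j 1) (g i) with hAdef
  set M : Matrix (Fin n) (Fin n) S := Matrix.of fun i j => c i j with hM
  have hspan : Ideal.span (Set.range x ∪ Set.range x') ≤ nilradical S := by
    rw [Ideal.span_le]
    rintro z (⟨i, rfl⟩ | ⟨i, rfl⟩)
    exacts [hx i, hx' i]
  have hdet : IsNilpotent (M.det - A.det) :=
    mem_nilradical.1 (det_sub_det_mem _ M A fun i j => hspan (hcm i j))
  have hdetU : IsUnit M.det := by
    have := hdet.isUnit_add_left_of_commute hA (Commute.all _ _)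
    rwa [add_sub_cancel] at this
  set v : Fin n → S := fun j => x j - x' j with hv
  have hMv : M.mulVec v = 0 := by
    funext i
    show ∑ j, c i j * (x j - x' j) = 0
    rw [← hc i, h i, sub_self]
  have hv0 : v = 0 := by
    have h2 := congrArg (fun w => Matrix.mulVec M⁻¹ w) hMv
    simpa [Matrix.mulVec_mulVec, Matrix.nonsing_inv_mul _ hdetU] using h2
  funext j
  have := congrFun hv0 j
  rw [hv] at this
  exact sub_eq_zero.1 this

/-- Surjectivity modulo nilpotents -/
lemma core_surj (g : Fin n → MvPolynomial (Fin n) S)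
    (hA : IsUnit (Matrix.det (Matrix.of fun i j =>
      MvPolynomial.coeff (Finsupp.single j 1) (g i))))
    (y : Fin n → S) (hy : ∀ i, IsNilpotent (y i))
    (h0 : ∀ i, IsNilpotent (MvPolynomial.coeff 0 (g i))) :
    ∃ x : Fin n → S,
      (∀ i, x i ∈ Ideal.span (Set.range y ∪ Set.range fun i => MvPolynomial.coeff 0 (g i)))
        ∧ ∀ i, MvPolynomial.eval x (g i) = y i := by
  classical
  set A : Matrix (Fin n) (Fin n) S :=
    Matrix.of fun i j => MvPolynomial.coeff (Finsupp.single j 1) (g i) with hAdef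
  set c0 : Fin n → S := fun i => MvPolynomial.coeff 0 (g i) with hc0
  set 𝔟 : Ideal S := Ideal.span (Set.range y ∪ Set.range c0) with h𝔟
  have hgen : ∀ i, y i ∈ 𝔟 := fun i => Ideal.subset_span (Or.inl ⟨i, rfl⟩)
  have hgen0 : ∀ i, c0 i ∈ 𝔟 := fun i => Ideal.subset_span (Or.inr ⟨i, rfl⟩)
  obtain ⟨N, hN⟩ : ∃ N : ℕ, 𝔟 ^ N = ⊥ := by
    obtain ⟨N, hN⟩ := span_finset_nilpotent
      ((Finset.univ.image y) ∪ (Finset.univ.image c0))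
      (by
        intro a ha
        rcases Finset.mem_union.1 ha with h' | h' <;>
          obtain ⟨i, _, rfl⟩ := Finset.mem_image.1 h'
        exacts [hy i, h0 i])
    refine ⟨N, ?_⟩
    rw [h𝔟]
    convert hN using 3
    simp [Set.image_univ]
  have key : ∀ k : ℕ, ∃ x : Fin n → S, (∀ i, x i ∈ 𝔟) ∧
      ∀ i, y i - MvPolynomial.eval x (g i) ∈ 𝔟 ^ (k + 1) := by
    intro k
    induction k with
    | zero =>
      refine ⟨0, fun i => Ideal.zero_mem _, fun i => ?_⟩
      rw [pow_one]
      have : MvPolynomial.eval (0 : Fin n → S) (g i) = c0 i := by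
        rw [hc0]
        rw [MvPolynomial.eval_zero, MvPolynomial.constantCoeff_eq]
      rw [this]
      exact Ideal.sub_mem _ (hgen i) (hgen0 i)
    | succ k ih =>
      obtain ⟨x, hxb, hxe⟩ := ih
      set e : Fin n → S := fun i => y i - MvPolynomial.eval x (g i) with he
      set hvec : Fin n → S := Matrix.mulVec A⁻¹ e with hh
      have hhb : ∀ j, hvec j ∈ 𝔟 ^ (k + 1) := by
        intro j
        show ∑ l, A⁻¹ j l * (y l - MvPolynomial.eval x (g l)) ∈ 𝔟 ^ (k + 1)
        exact Ideal.sum_mem _ fun l _ => Ideal.mul_mem_left _ _ (hxe l)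
      have hhb' : ∀ j, hvec j ∈ 𝔟 := fun j =>
        Ideal.pow_le_self (Nat.succ_ne_zero k) (hhb j)
      set x' : Fin n → S := fun j => x j + hvec j with hx'
      have hx'b : ∀ j, x' j ∈ 𝔟 := fun j => Ideal.add_mem _ (hxb j) (hhb' j)
      refine ⟨x', hx'b, fun i => ?_⟩
      choose c hc hcm using fun i => poly_taylor (g i) x' x
      have hspan : Ideal.span (Set.range x' ∪ Set.range x) ≤ 𝔟 := by
        rw [Ideal.span_le]
        rintro z (⟨j, rfl⟩ | ⟨j, rfl⟩)
        exacts [hx'b j, hxb j]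
      have hA_h : Matrix.mulVec A hvec = e := by
        rw [hh, Matrix.mulVec_mulVec, Matrix.mul_nonsing_inv _ hA, Matrix.one_mulVec]
      have step : y i - MvPolynomial.eval x' (g i)
          = e i - ∑ j, c i j * (x' j - x j) := by
        simp only [he]
        linear_combination -hc i
      have hAe : e i = ∑ j, A i j * (x' j - x j) := by
        have : ∀ j, x' j - x j = hvec j := fun j => by rw [hx']; ring
        rw [← hA_h]
        show Matrix.mulVec A hvec i = _
        rw [Matrix.mulVec]
        exact Finset.sum_congr rfl fun j _ => by rw [this j]
      rw [step, hAe, ← Finset.sum_sub_distrib]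
      refine Ideal.sum_mem _ fun j _ => ?_
      have h1 : A i j * (x' j - x j) - c i j * (x' j - x j)
          = -((c i j - A i j) * (x' j - x j)) := by ring
      rw [h1]
      refine neg_mem ?_
      have hmem1 : c i j - A i j ∈ 𝔟 := hspan (hcm i j)
      have hmem2 : x' j - x j ∈ 𝔟 ^ (k + 1) := by
        have : x' j - x j = hvec j := by rw [hx']; ring
        rw [this]; exact hhb j
      have := Ideal.mul_mem_mul hmem1 hmem2
      rwa [← pow_succ'] at this
  obtain ⟨x, hxb, hxe⟩ := key N
  refine ⟨x, hxb, fun i => ?_⟩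
  have : y i - MvPolynomial.eval x (g i) ∈ 𝔟 ^ (N + 1) := hxe i
  have hle : 𝔟 ^ (N + 1) ≤ 𝔟 ^ N := Ideal.pow_le_pow_right (Nat.le_succ N)
  rw [hN] at hle
  have := hle this
  rw [Ideal.mem_bot] at this
  exact (sub_eq_zero.1 this).symm

end Core2

section Topo
open Filter
variable {R : Type*} [CommRing R] [UniformSpace R] [IsUniformAddGroup R]
  [IsTopologicalRing R] [T2Space R] [CompleteSpace R]

lemma hasSum_mem_closed {ι : Type*} {I : Ideal R} (hI : IsClosed (I : Set R))
    {g : ι → R} {a : R} (hg : HasSum g a) (h : ∀ i, g i ∈ I) : a ∈ I :=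
  hI.mem_of_tendsto hg (Filter.Eventually.of_forall fun s => Ideal.sum_mem _ fun i _ => h i)

lemma ideal_isOpen_isClosed {I : Ideal R} (hI : (I : Set R) ∈ nhds (0 : R)) :
    IsOpen (I : Set R) ∧ IsClosed (I : Set R) := by
  have ho : IsOpen (I.toAddSubgroup : Set R) := AddSubgroup.isOpen_of_mem_nhds _ hI
  exact ⟨ho, I.toAddSubgroup.isClosed_of_isOpen ho⟩

variable (hlin : ∀ U ∈ nhds (0 : R), ∃ I : Ideal R, (I : Set R) ∈ nhds (0 : R) ∧ (I : Set R) ⊆ U)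

include hlin in
lemma summable_mul_of_cofinite {ι : Type*} {u : ι → R} (v : ι → R)
    (hu : Tendsto u cofinite (nhds (0 : R))) : Summable fun i => u i * v i := by
  rw [summable_iff_vanishing]
  intro e he
  obtain ⟨I, hI, hIe⟩ := hlin e he
  have hfin : {i | u i ∉ (I : Set R)}.Finite := by
    have h2 := hu hI
    rw [mem_map, mem_cofinite] at h2
    exact h2
  refine ⟨hfin.toFinset, fun t ht => hIe ?_⟩
  refine Ideal.sum_mem _ fun i hi => Ideal.mul_mem_right _ _ ?_
  by_contra hcon
  exact (Finset.disjoint_left.1 ht hi) (hfin.mem_toFinset.2 hcon)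

include hlin in
lemma summable_eval {n : ℕ} {φ : MvPowerSeries (Fin n) R}
    (hφ : Tendsto (fun d : Fin n →₀ ℕ => MvPowerSeries.coeff d φ) cofinite (nhds (0 : R)))
    (x : Fin n → R) :
    Summable fun d : Fin n →₀ ℕ => MvPowerSeries.coeff d φ * ∏ i, x i ^ d i :=
  summable_mul_of_cofinite hlin _ hφ

include hlin in
/-- partial sum approximation of evalRestricted -/
lemma evalRestricted_sub_partial_mem {n : ℕ} {φ : MvPowerSeries (Fin n) R}
    (hφ : Tendsto (fun d : Fin n →₀ ℕ => MvPowerSeries.coeff d φ) cofinite (nhds (0 : R)))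
    (x : Fin n → R) {I : Ideal R} (hcl : IsClosed (I : Set R))
    (s : Finset (Fin n →₀ ℕ)) (hs : ∀ d ∉ s, MvPowerSeries.coeff d φ ∈ I) :
    evalRestricted φ x - ∑ d ∈ s, MvPowerSeries.coeff d φ * ∏ i, x i ^ d i ∈ I := by
  have hsum := summable_eval hlin hφ x
  have := Summable.sum_add_tsum_compl (s := s) hsum
  rw [evalRestricted, ← this, add_sub_cancel_left]
  exact hasSum_mem_closed hcl (hsum.subtype _).hasSum
    fun d => Ideal.mul_mem_right _ _ (hs d.1 d.2)

include hlin in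
/-- congruence of evalRestricted mod a closed ideal -/
lemma evalRestricted_congr_mem {n : ℕ} {φ : MvPowerSeries (Fin n) R}
    (hφ : Tendsto (fun d : Fin n →₀ ℕ => MvPowerSeries.coeff d φ) cofinite (nhds (0 : R)))
    {x x' : Fin n → R} {I : Ideal R} (hcl : IsClosed (I : Set R))
    (hxx : ∀ i, x i - x' i ∈ I) :
    evalRestricted φ x - evalRestricted φ x' ∈ I := by
  have h1 := (summable_eval hlin hφ x).hasSum.sub (summable_eval hlin hφ x').hasSum
  refine hasSum_mem_closed hcl h1 fun d => ?_
  rw [← mul_sub]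
  exact Ideal.mul_mem_left _ _
    (prod_sub_prod_mem_aux I Finset.univ _ _ fun i _ => pow_sub_pow_mem I (hxx i) (d i))

include hlin in
/-- evalRestricted maps mⁿ into m -/
lemma evalRestricted_mem {n : ℕ} {φ : MvPowerSeries (Fin n) R}
    (hφ : Tendsto (fun d : Fin n →₀ ℕ => MvPowerSeries.coeff d φ) cofinite (nhds (0 : R)))
    {m : Ideal R} (hmclosed : IsClosed (m : Set R))
    (h0 : MvPowerSeries.constantCoeff φ ∈ m)
    {x : Fin n → R} (hx : ∀ i, x i ∈ m) : evalRestricted φ x ∈ m := by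
  refine hasSum_mem_closed hmclosed (summable_eval hlin hφ x).hasSum fun d => ?_
  rcases eq_or_ne d 0 with rfl | hd
  · simpa using h0
  · obtain ⟨j, hj⟩ : ∃ j, d j ≠ 0 := by
      by_contra hcon
      push_neg at hcon
      exact hd (Finsupp.ext hcon)
    exact Ideal.mul_mem_left _ _ (prod_pow_mem m _ x hj (hx j))

end Topo

section Bridge
open Filter
variable {R : Type*} [CommRing R] [UniformSpace R] [IsUniformAddGroup R]
  [IsTopologicalRing R] [T2Space R] [CompleteSpace R]
  (hlin : ∀ U ∈ nhds (0 : R), ∃ I : Ideal R, (I : Set R) ∈ nhds (0 : R) ∧ (I : Set R) ⊆ U)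
  {n : ℕ} {f : Fin n → MvPowerSeries (Fin n) R}
  (hres : ∀ i, Tendsto (fun d : Fin n →₀ ℕ => MvPowerSeries.coeff d (f i))
      cofinite (nhds (0 : R)))

include hlin hres in
lemma exists_quot_poly {I : Ideal R} (hI : (I : Set R) ∈ nhds (0 : R)) :
    ∃ g : Fin n → MvPolynomial (Fin n) (R ⧸ I),
      (∀ i d, MvPolynomial.coeff d (g i) = Ideal.Quotient.mk I (MvPowerSeries.coeff d (f i)))
      ∧ (∀ i (x : Fin n → R), Ideal.Quotient.mk I (evalRestricted (f i) x)
          = MvPolynomial.eval (fun j => Ideal.Quotient.mk I (x j)) (g i)) := by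
  classical
  have hcl := (ideal_isOpen_isClosed hI).2
  have hfin : ∀ i, {d : Fin n →₀ ℕ | MvPowerSeries.coeff d (f i) ∉ (I : Set R)}.Finite := by
    intro i
    have h2 := hres i hI
    rw [mem_map, mem_cofinite] at h2
    exact h2
  set π := Ideal.Quotient.mk I with hπ
  refine ⟨fun i => ∑ d ∈ (hfin i).toFinset,
    MvPolynomial.monomial d (π (MvPowerSeries.coeff d (f i))), fun i d => ?_, fun i x => ?_⟩
  · rw [MvPolynomial.coeff_sum]
    rw [Finset.sum_congr rfl fun d' _ => MvPolynomial.coeff_monomial d d' _]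
    rw [Finset.sum_ite_eq' (hfin i).toFinset d
      (fun d' => π (MvPowerSeries.coeff d' (f i)))]
    split
    · rfl
    · next h =>
      rw [Set.Finite.mem_toFinset] at h
      simp only [Set.mem_setOf_eq, not_not] at h
      exact (Ideal.Quotient.eq_zero_iff_mem.2 h).symm
  · have hb : evalRestricted (f i) x
        - ∑ d ∈ (hfin i).toFinset, MvPowerSeries.coeff d (f i) * ∏ j, x j ^ d j ∈ I := by
      refine evalRestricted_sub_partial_mem hlin (hres i) x hcl _ fun d hd => ?_
      rw [Set.Finite.mem_toFinset] at hd
      simp only [Set.mem_setOf_eq, not_not] at hd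
      exact hd
    rw [Ideal.Quotient.eq.2 hb]
    rw [map_sum]
    rw [map_sum]
    refine Finset.sum_congr rfl fun d _ => ?_
    rw [MvPolynomial.eval_monomial, map_mul]
    congr 1
    rw [Finsupp.prod_pow]
    rw [map_prod]
    exact Finset.prod_congr rfl fun j _ => by rw [map_pow]

variable (m : Ideal R)
  (hmnil : ∀ x ∈ m, Tendsto (fun k : ℕ => x ^ k) atTop (nhds (0 : R)))

include hmnil in
lemma quot_nilpotent {I : Ideal R} (hI : (I : Set R) ∈ nhds (0 : R)) {a : R} (ha : a ∈ m) :
    IsNilpotent (Ideal.Quotient.mk I a) := by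
  have := (hmnil a ha) hI
  rw [mem_map, mem_atTop_sets] at this
  obtain ⟨k, hk⟩ := this
  exact ⟨k, by rw [← map_pow, Ideal.Quotient.eq_zero_iff_mem]; exact hk k le_rfl⟩

variable (hJ : IsUnit (Matrix.det fun i j : Fin n =>
      MvPowerSeries.coeff (Finsupp.single j 1) (f i)))

include hlin hres hmnil hJ in
lemma injmod {I : Ideal R} (hI : (I : Set R) ∈ nhds (0 : R)) {x x' : Fin n → R}
    (hx : ∀ i, x i ∈ m) (hx' : ∀ i, x' i ∈ m)
    (h : ∀ i, evalRestricted (f i) x - evalRestricted (f i) x' ∈ I) :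
    ∀ i, x i - x' i ∈ I := by
  obtain ⟨g, hgc, hge⟩ := exists_quot_poly hlin hres hI
  set π := Ideal.Quotient.mk I with hπ
  have hA : IsUnit (Matrix.det (Matrix.of fun i j =>
      MvPolynomial.coeff (Finsupp.single j 1) (g i))) := by
    have : (Matrix.of fun i j => MvPolynomial.coeff (Finsupp.single j 1) (g i))
        = π.mapMatrix (Matrix.of fun i j : Fin n =>
            MvPowerSeries.coeff (Finsupp.single j 1) (f i)) := by
      ext i j
      rw [RingHom.mapMatrix_apply]
      exact hgc i _
    rw [this, ← RingHom.map_det]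
    exact hJ.map π
  have heq := core_inj g hA (fun j => π (x j)) (fun j => π (x' j))
    (fun j => quot_nilpotent m hmnil hI (hx j))
    (fun j => quot_nilpotent m hmnil hI (hx' j))
    (fun i => by rw [← hge i x, ← hge i x', Ideal.Quotient.eq.2 (h i)])
  intro i
  exact Ideal.Quotient.eq.1 (congrFun heq i)

include hlin hres hmnil hJ in
lemma surjmod (hf0 : ∀ i, MvPowerSeries.constantCoeff (f i) ∈ m)
    {I : Ideal R} (hI : (I : Set R) ∈ nhds (0 : R)) {y : Fin n → R}
    (hy : ∀ i, y i ∈ m) :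
    ∃ x : Fin n → R, (∀ i, x i ∈ m) ∧ ∀ i, evalRestricted (f i) x - y i ∈ I := by
  obtain ⟨g, hgc, hge⟩ := exists_quot_poly hlin hres hI
  set π := Ideal.Quotient.mk I with hπ
  have hA : IsUnit (Matrix.det (Matrix.of fun i j =>
      MvPolynomial.coeff (Finsupp.single j 1) (g i))) := by
    have : (Matrix.of fun i j => MvPolynomial.coeff (Finsupp.single j 1) (g i))
        = π.mapMatrix (Matrix.of fun i j : Fin n =>
            MvPowerSeries.coeff (Finsupp.single j 1) (f i)) := by
      ext i j
      rw [RingHom.mapMatrix_apply]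
      exact hgc i _
    rw [this, ← RingHom.map_det]
    exact hJ.map π
  have hc0 : ∀ i, MvPolynomial.coeff 0 (g i) = π (MvPowerSeries.constantCoeff (f i)) :=
    fun i => hgc i 0
  obtain ⟨xb, hxb, hxe⟩ := core_surj g hA (fun i => π (y i))
    (fun i => quot_nilpotent m hmnil hI (hy i))
    (fun i => by rw [hc0 i]; exact quot_nilpotent m hmnil hI (hf0 i))
  have hmap : ∀ i, xb i ∈ Ideal.map π m := by
    intro i
    refine Ideal.span_le.2 ?_ (hxb i)
    rintro z (⟨j, rfl⟩ | ⟨j, rfl⟩)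
    · exact Ideal.mem_map_of_mem π (hy j)
    · show MvPolynomial.coeff 0 (g j) ∈ (Ideal.map π m : Set (R ⧸ I))
      rw [hc0 j]
      exact Ideal.mem_map_of_mem π (hf0 j)
  have hlift : ∀ i, ∃ a, a ∈ m ∧ π a = xb i := by
    intro i
    have := (Ideal.mem_map_iff_of_surjective π Ideal.Quotient.mk_surjective).1 (hmap i)
    obtain ⟨a, ha, hae⟩ := this
    exact ⟨a, ha, hae⟩
  choose x hxm hxeq using hlift
  refine ⟨x, hxm, fun i => ?_⟩
  rw [← Ideal.Quotient.eq, ← hπ]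
  rw [hge i x]
  have : (fun j => π (x j)) = xb := funext hxeq
  rw [this]
  exact hxe i

end Bridge

section Main
open Filter

variable {R : Type*} [CommRing R] [UniformSpace R] [IsUniformAddGroup R]
  [IsTopologicalRing R] [T2Space R] [CompleteSpace R]

lemma eq_zero_of_mem_all_ideals
    (hlin : ∀ U ∈ nhds (0 : R), ∃ I : Ideal R, (I : Set R) ∈ nhds (0 : R) ∧ (I : Set R) ⊆ U)
    {z : R} (h : ∀ I : Ideal R, (I : Set R) ∈ nhds (0 : R) → z ∈ I) : z = 0 := by
  by_contra hz
  have hU : ({z}ᶜ : Set R) ∈ nhds (0 : R) :=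
    (isOpen_compl_singleton).mem_nhds (by simp [Ne.symm hz])
  obtain ⟨I, hI, hIe⟩ := hlin _ hU
  exact hIe (h I hI) rfl

theorem restricted_power_series_bijOn'
    (hlin : ∀ U ∈ nhds (0 : R), ∃ I : Ideal R, (I : Set R) ∈ nhds (0 : R) ∧ (I : Set R) ⊆ U)
    (m : Ideal R) (hmclosed : IsClosed (m : Set R))
    (hmnil : ∀ x ∈ m, Tendsto (fun k : ℕ => x ^ k) atTop (nhds (0 : R)))
    {n : ℕ} (f : Fin n → MvPowerSeries (Fin n) R)
    (hres : ∀ i, Tendsto (fun d : Fin n →₀ ℕ => MvPowerSeries.coeff d (f i))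
      cofinite (nhds (0 : R)))
    (hf0 : ∀ i, MvPowerSeries.constantCoeff (f i) ∈ m)
    (hJ : IsUnit (Matrix.det fun i j : Fin n =>
      MvPowerSeries.coeff (Finsupp.single j 1) (f i))) :
    Set.BijOn (fun x (i : Fin n) => evalRestricted (f i) x)
      {x : Fin n → R | ∀ i, x i ∈ m} {x : Fin n → R | ∀ i, x i ∈ m} := by
  classical
  set mS : Set (Fin n → R) := {x : Fin n → R | ∀ i, x i ∈ m} with hmS
  have hmSclosed : IsClosed mS := by
    have : mS = ⋂ i, (fun x : Fin n → R => x i) ⁻¹' (m : Set R) := by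
      ext x; simp [hmS, Set.mem_iInter]
    rw [this]
    exact isClosed_iInter fun i => hmclosed.preimage (continuous_apply i)
  have hmaps : Set.MapsTo (fun x (i : Fin n) => evalRestricted (f i) x) mS mS :=
    fun x hx i => evalRestricted_mem hlin (hres i) hmclosed (hf0 i) hx
  refine ⟨hmaps, ?_, ?_⟩
  · -- injective
    intro x hx x' hx' heq
    funext i
    rw [← sub_eq_zero]
    refine eq_zero_of_mem_all_ideals hlin fun I hI => ?_
    refine injmod hlin hres m hmnil hJ hI hx hx' (fun i' => ?_) i
    rw [show evalRestricted (f i') x = evalRestricted (f i') x' from congrFun heq i']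
    rw [sub_self]
    exact Ideal.zero_mem I
  · -- surjective
    intro y hy
    set T := {I : Ideal R // (I : Set R) ∈ nhds (0 : R)} with hT
    have : Nonempty T := ⟨⟨⊤, by simp⟩⟩
    set C : T → Set (Fin n → R) := fun I =>
      {x | (∀ i, x i ∈ m) ∧ ∀ i, evalRestricted (f i) x - y i ∈ I.1} with hC
    have hCne : ∀ I, (C I).Nonempty := by
      rintro ⟨I, hI⟩
      obtain ⟨x, hxm, hxe⟩ := surjmod hlin hres m hmnil hJ hf0 hI hy
      exact ⟨x, hxm, hxe⟩
    have hdir : Directed (· ≥ ·) fun I : T => Filter.principal (C I) := by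
      rintro ⟨I, hI⟩ ⟨J, hJ'⟩
      refine ⟨⟨I ⊓ J, ?_⟩, ?_, ?_⟩
      · rw [Submodule.coe_inf]
        exact Filter.inter_mem hI hJ'
      · refine Filter.principal_mono.2 fun x hx => ⟨hx.1, fun i => ?_⟩
        exact (Submodule.mem_inf.1 (hx.2 i)).1
      · refine Filter.principal_mono.2 fun x hx => ⟨hx.1, fun i => ?_⟩
        exact (Submodule.mem_inf.1 (hx.2 i)).2
    set F : Filter (Fin n → R) := ⨅ I : T, Filter.principal (C I) with hF
    have hFne : F.NeBot :=
      Filter.iInf_neBot_of_directed hdir fun I => Filter.principal_neBot_iff.2 (hCne I)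
    have hFle : ∀ I : T, F ≤ Filter.principal (C I) := fun I => iInf_le _ I
    -- Cauchy
    have hcauchy : Cauchy F := by
      refine cauchy_iff.2 ⟨hFne, fun V hV => ?_⟩
      rw [uniformity_eq_comap_nhds_zero, Filter.mem_comap] at hV
      obtain ⟨U, hU, hUV⟩ := hV
      rw [nhds_pi, Filter.mem_pi] at hU
      obtain ⟨Ifin, _, t, ht, htU⟩ := hU
      choose Iv hIv hIvsub using fun i => hlin (t i) (ht i)
      set K : Ideal R := ⨅ i, Iv i with hK
      have hKcoe : (K : Set R) = ⋂ i, (Iv i : Set R) := by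
        rw [hK]
        exact Submodule.coe_iInf _
      have hKmem : (K : Set R) ∈ nhds (0 : R) := by
        rw [hKcoe]
        exact Filter.iInter_mem.2 hIv
      refine ⟨C ⟨K, hKmem⟩, (hFle ⟨K, hKmem⟩) (Filter.mem_principal_self _), ?_⟩
      rintro ⟨a, b⟩ ⟨ha, hb⟩
      refine hUV ?_
      show b - a ∈ U
      refine htU fun j _ => ?_
      show b j - a j ∈ t j
      refine hIvsub j ?_
      have hsubK : b j - a j ∈ K := by
        refine injmod hlin hres m hmnil hJ hKmem hb.1 ha.1 (fun i' => ?_) j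
        have := Ideal.sub_mem K (hb.2 i') (ha.2 i')
        rwa [sub_sub_sub_cancel_right] at this
      have : K ≤ Iv j := iInf_le _ j
      exact this hsubK
    obtain ⟨x, hxlim⟩ := CompleteSpace.complete hcauchy
    have hclosure : ∀ I : T, x ∈ closure (C I) := by
      intro I
      rw [mem_closure_iff_clusterPt]
      exact Filter.neBot_of_le (le_inf hxlim (hFle I))
    have hxmS : x ∈ mS := by
      have h1 : closure (C ⟨⊤, by simp⟩) ⊆ mS := by
        rw [← hmSclosed.closure_eq]
        exact closure_mono fun z hz => hz.1
      exact h1 (hclosure _)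
    refine ⟨x, hxmS, ?_⟩
    funext i
    rw [← sub_eq_zero]
    refine eq_zero_of_mem_all_ideals hlin fun I hI => ?_
    have hclI := (ideal_isOpen_isClosed hI).2
    have hNx : {w : Fin n → R | ∀ j, w j - x j ∈ I} ∈ nhds x := by
      have heq : {w : Fin n → R | ∀ j, w j - x j ∈ I}
          = ⋂ j, (fun w : Fin n → R => w j - x j) ⁻¹' (I : Set R) := by
        ext w; simp [Set.mem_iInter]
      rw [heq]
      refine Filter.iInter_mem.2 fun j => ?_
      refine ContinuousAt.preimage_mem_nhds
        (((continuous_apply j).sub continuous_const).continuousAt) ?_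
      rwa [sub_self]
    obtain ⟨x', hx'1, hx'2⟩ := mem_closure_iff_nhds.1 (hclosure ⟨I, hI⟩) _ hNx
    have h1 : evalRestricted (f i) x - evalRestricted (f i) x' ∈ I := by
      refine evalRestricted_congr_mem hlin (hres i) hclI fun j => ?_
      have := neg_mem (hx'1 j)
      rwa [neg_sub] at this
    have h2 : evalRestricted (f i) x' - y i ∈ I := hx'2.2 i
    have := Ideal.add_mem I h1 h2
    rwa [sub_add_sub_cancel] at this
end Main

/-- If `R` is linearly topologized, Hausdorff and complete, `𝔪` is a closed ideal whose
elements are topologically nilpotent, and `f` is an `n`-tuple of restricted power series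
with `f(0) ∈ 𝔪ⁿ` and Jacobian determinant at `0` a unit, then `x ↦ f(x)` is a bijection
of `𝔪ⁿ` onto itself. -/
theorem restricted_power_series_bijOn
    {R : Type*} [CommRing R] [UniformSpace R] [IsUniformAddGroup R]
    [IsTopologicalRing R] [T2Space R] [CompleteSpace R]
    (hlin : ∀ U ∈ nhds (0 : R), ∃ I : Ideal R, (I : Set R) ∈ nhds (0 : R) ∧ (I : Set R) ⊆ U)
    (m : Ideal R) (hmclosed : IsClosed (m : Set R))
    (hmnil : ∀ x ∈ m, Tendsto (fun k : ℕ => x ^ k) atTop (nhds (0 : R)))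
    {n : ℕ} (f : Fin n → MvPowerSeries (Fin n) R)
    (hres : ∀ i, Tendsto (fun d : Fin n →₀ ℕ => MvPowerSeries.coeff d (f i))
      cofinite (nhds (0 : R)))
    (hf0 : ∀ i, MvPowerSeries.constantCoeff (f i) ∈ m)
    (hJ : IsUnit (Matrix.det fun i j : Fin n =>
      MvPowerSeries.coeff (Finsupp.single j 1) (f i))) :
    Set.BijOn (fun x (i : Fin n) => evalRestricted (f i) x)
      {x : Fin n → R | ∀ i, x i ∈ m} {x : Fin n → R | ∀ i, x i ∈ m} :=
  restricted_power_series_bijOn' hlin m hmclosed hmnil f hres hf0 hJ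
end

section
/- The ring K[[X₁,…,Xₙ]]_alg of formal power series algebraic over K[X₁,…,Xₙ] is a Henselian local ring, and it is closed under power substitutions Xᵢ ↦ Xᵢ^{rᵢ} and under division by a coordinate (i.e. if φ ∈ K[[X]]_alg and Xᵢ divides φ in K[[X]], then φ/Xᵢ ∈ K[[X]]_alg). -/
open scoped Classical

/-- A multivariate power series is algebraic if it satisfies a nonzero polynomial
relation over `K[X₁,…,Xₙ]`. -/
def IsAlgebraicMvPowerSeries {K : Type*} [CommRing K] {n : ℕ}
    (φ : MvPowerSeries (Fin n) K) : Prop :=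
  ∃ q : Polynomial (MvPolynomial (Fin n) K), q ≠ 0 ∧
    Polynomial.eval₂ MvPolynomial.coeToMvPowerSeries.ringHom φ q = 0

/-- The power substitution `Xᵢ ↦ Xᵢ^{rᵢ}` in a multivariate power series. -/
noncomputable def mvPowSubst {K : Type*} [CommRing K] {n : ℕ} (r : Fin n → ℕ)
    (φ : MvPowerSeries (Fin n) K) : MvPowerSeries (Fin n) K :=
  fun d : Fin n →₀ ℕ =>
    if ∀ i, r i ∣ d i then
      MvPowerSeries.coeff (Finsupp.equivFunOnFinite.symm fun i => d i / r i) φ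
    else 0

namespace AlgPS

variable {K : Type*} [Field K] {n : ℕ}

/-- total degree of a multi-index -/
def mdeg (d : Fin n →₀ ℕ) : ℕ := ∑ i, d i

lemma mdeg_add (e f : Fin n →₀ ℕ) : mdeg (e + f) = mdeg e + mdeg f := by
  simp [mdeg, Finsupp.add_apply, Finset.sum_add_distrib]

lemma mdeg_eq_zero {d : Fin n →₀ ℕ} : mdeg d = 0 ↔ d = 0 := by
  constructor
  · intro h
    ext i
    have := Finset.sum_eq_zero_iff.mp h i (Finset.mem_univ i)
    simpa using this
  · rintro rfl; simp [mdeg]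

/-- the ideal of power series whose coefficients vanish in degrees `< k` -/
def lowIdeal (K : Type*) [Field K] (n k : ℕ) : Ideal (MvPowerSeries (Fin n) K) where
  carrier := {φ | ∀ d, mdeg d < k → MvPowerSeries.coeff d φ = 0}
  add_mem' := by
    intro φ ψ hφ hψ d hd
    simp [map_add, hφ d hd, hψ d hd]
  zero_mem' := by intro d _; simp
  smul_mem' := by
    intro c φ hφ d hd
    rw [smul_eq_mul, MvPowerSeries.coeff_mul]
    apply Finset.sum_eq_zero
    rintro ⟨e, f⟩ hef
    rw [Finset.HasAntidiagonal.mem_antidiagonal] at hef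
    have hf : mdeg f < k := by
      have := mdeg_add e f
      rw [hef] at this
      omega
    rw [hφ f hf, mul_zero]

lemma mem_lowIdeal_iff {k : ℕ} {φ : MvPowerSeries (Fin n) K} :
    φ ∈ lowIdeal K n k ↔ ∀ d, mdeg d < k → MvPowerSeries.coeff d φ = 0 := Iff.rfl

lemma maximalIdeal_le_lowIdeal :
    IsLocalRing.maximalIdeal (MvPowerSeries (Fin n) K) ≤ lowIdeal K n 1 := by
  intro φ hφ
  rw [mem_lowIdeal_iff]
  intro d hd
  have hd0 : d = 0 := mdeg_eq_zero.mp (Nat.lt_one_iff.mp hd)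
  subst hd0
  by_contra h
  exact (IsLocalRing.mem_maximalIdeal _).mp hφ
    (MvPowerSeries.isUnit_iff_constantCoeff.mpr (isUnit_iff_ne_zero.mpr h))

lemma lowIdeal_mul_le (a b : ℕ) :
    lowIdeal K n a * lowIdeal K n b ≤ lowIdeal K n (a + b) := by
  refine Ideal.mul_le.mpr fun φ hφ ψ hψ => ?_
  rw [mem_lowIdeal_iff]
  intro d hd
  rw [MvPowerSeries.coeff_mul]
  apply Finset.sum_eq_zero
  rintro ⟨e, f⟩ hef
  rw [Finset.HasAntidiagonal.mem_antidiagonal] at hef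
  have hde : mdeg e + mdeg f < a + b := by rw [← mdeg_add, hef]; exact hd
  rcases lt_or_ge (mdeg e) a with h | h
  · rw [hφ e h, zero_mul]
  · rw [hψ f (by omega), mul_zero]

lemma pow_maximalIdeal_le_lowIdeal (k : ℕ) :
    (IsLocalRing.maximalIdeal (MvPowerSeries (Fin n) K)) ^ k ≤ lowIdeal K n k := by
  induction k with
  | zero =>
    intro φ _
    rw [mem_lowIdeal_iff]
    intro d hd
    exact absurd hd (Nat.not_lt_zero _)
  | succ k ih =>
    rw [pow_succ]
    calc (IsLocalRing.maximalIdeal (MvPowerSeries (Fin n) K)) ^ k *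
          IsLocalRing.maximalIdeal (MvPowerSeries (Fin n) K)
        ≤ lowIdeal K n k * lowIdeal K n 1 :=
          Ideal.mul_mono ih maximalIdeal_le_lowIdeal
      _ ≤ lowIdeal K n (k + 1) := lowIdeal_mul_le k 1

lemma X_mem_maximalIdeal (i : Fin n) :
    MvPowerSeries.X i ∈ IsLocalRing.maximalIdeal (MvPowerSeries (Fin n) K) := by
  rw [IsLocalRing.mem_maximalIdeal, mem_nonunits_iff, MvPowerSeries.isUnit_iff_constantCoeff,
    MvPowerSeries.constantCoeff_X]
  exact not_isUnit_zero

lemma lowIdeal_le_pow_maximalIdeal (k : ℕ) :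
    lowIdeal K n k ≤ (IsLocalRing.maximalIdeal (MvPowerSeries (Fin n) K)) ^ k := by
  induction k with
  | zero => simp only [pow_zero, Ideal.one_eq_top]; exact le_top
  | succ k ih =>
    intro φ hφ
    -- decompose φ = ∑ i, X i * Φ i, splitting coefficients according to the least
    -- variable occurring in the monomial
    set Φ : Fin n → MvPowerSeries (Fin n) K := fun i =>
      (fun c : Fin n →₀ ℕ =>
        if ((c + Finsupp.single i 1).support.min = (i : WithTop (Fin n))) then
          MvPowerSeries.coeff (c + Finsupp.single i 1) φ else 0) with hΦdef
    have hΦcoeff : ∀ (i : Fin n) (c : Fin n →₀ ℕ), MvPowerSeries.coeff c (Φ i) =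
        if ((c + Finsupp.single i 1).support.min = (i : WithTop (Fin n))) then
          MvPowerSeries.coeff (c + Finsupp.single i 1) φ else 0 := fun i c => rfl
    have hXmul : ∀ (i : Fin n) (d : Fin n →₀ ℕ),
        MvPowerSeries.coeff d (MvPowerSeries.X i * Φ i) =
        if Finsupp.single i 1 ≤ d then MvPowerSeries.coeff (d - Finsupp.single i 1) (Φ i)
        else 0 := by
      intro i d
      rw [MvPowerSeries.X_def, MvPowerSeries.coeff_monomial_mul]
      split <;> simp
    have hdecomp : φ = ∑ i, MvPowerSeries.X i * Φ i := by
      ext d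
      rw [map_sum]
      by_cases hd0 : d = 0
      · subst hd0
        have h1 : MvPowerSeries.coeff 0 φ = 0 := hφ 0 (by simp [mdeg_eq_zero.mpr rfl])
        rw [h1]
        symm
        apply Finset.sum_eq_zero
        intro i _
        rw [hXmul]
        rw [if_neg]
        intro hle
        have := Finsupp.single_le_iff.mp hle
        simp at this
      · have hne : d.support.Nonempty := Finsupp.support_nonempty_iff.mpr hd0
        set i₀ := d.support.min' hne with hi₀
        have hmin : d.support.min = (i₀ : WithTop (Fin n)) := (Finset.coe_min' hne).symm
        have hi₀mem : i₀ ∈ d.support := Finset.min'_mem _ _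
        have hi₀pos : 1 ≤ d i₀ := Nat.one_le_iff_ne_zero.mpr (Finsupp.mem_support_iff.mp hi₀mem)
        have hsum : (∑ i, MvPowerSeries.coeff d (MvPowerSeries.X i * Φ i)) =
            MvPowerSeries.coeff d (MvPowerSeries.X i₀ * Φ i₀) := by
          apply Finset.sum_eq_single
          · intro i _ hi
            rw [hXmul]
            split
            · next hle =>
              rw [hΦcoeff, if_neg, ]
              rw [tsub_add_cancel_of_le hle, hmin]
              exact fun h => hi (by exact_mod_cast h : i₀ = i).symm
            · rfl
          · intro h; exact absurd (Finset.mem_univ i₀) h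
        rw [hsum, hXmul, if_pos (Finsupp.single_le_iff.mpr hi₀pos), hΦcoeff,
          tsub_add_cancel_of_le (Finsupp.single_le_iff.mpr hi₀pos), if_pos hmin]
    have hΦmem : ∀ i, Φ i ∈ lowIdeal K n k := by
      intro i
      rw [mem_lowIdeal_iff]
      intro c hc
      rw [hΦcoeff]
      split
      · apply hφ
        rw [mdeg_add]
        have : mdeg (Finsupp.single i 1) = 1 := by simp [mdeg, Finsupp.single_apply]
        omega
      · rfl
    rw [hdecomp]
    apply Ideal.sum_mem
    intro i _
    rw [pow_succ']
    exact Ideal.mul_mem_mul (X_mem_maximalIdeal i) (ih (hΦmem i))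

lemma mem_pow_maximalIdeal_iff {k : ℕ} {φ : MvPowerSeries (Fin n) K} :
    φ ∈ (IsLocalRing.maximalIdeal (MvPowerSeries (Fin n) K)) ^ k ↔
      ∀ d, mdeg d < k → MvPowerSeries.coeff d φ = 0 :=
  ⟨fun h => pow_maximalIdeal_le_lowIdeal k h, fun h => lowIdeal_le_pow_maximalIdeal k h⟩

instance : IsAdicComplete (IsLocalRing.maximalIdeal (MvPowerSeries (Fin n) K))
    (MvPowerSeries (Fin n) K) := by
  refine { toIsHausdorff := ⟨?_⟩, toIsPrecomplete := ⟨?_⟩ }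
  · intro x hx
    ext d
    have := hx (mdeg d + 1)
    rw [SModEq.zero, ← Ideal.one_eq_top, Ideal.smul_eq_mul, mul_one] at this
    rw [map_zero]
    exact mem_pow_maximalIdeal_iff.mp this d (lt_add_one _)
  · intro f hf
    refine ⟨(show MvPowerSeries (Fin n) K from fun d => MvPowerSeries.coeff d (f (mdeg d + 1))),
      fun m => ?_⟩
    rw [SModEq.sub_mem, ← Ideal.one_eq_top, Ideal.smul_eq_mul, mul_one]
    rw [mem_pow_maximalIdeal_iff]
    intro d hd
    have h1 : f (mdeg d + 1) ≡ f m [SMOD ((IsLocalRing.maximalIdeal (MvPowerSeries (Fin n) K)) ^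
        (mdeg d + 1) • (⊤ : Submodule (MvPowerSeries (Fin n) K) (MvPowerSeries (Fin n) K)))] :=
      hf (by omega)
    rw [SModEq.sub_mem, ← Ideal.one_eq_top, Ideal.smul_eq_mul, mul_one] at h1
    have h2 := mem_pow_maximalIdeal_iff.mp h1 d (lt_add_one _)
    rw [map_sub] at h2 ⊢
    have hcL : MvPowerSeries.coeff d
        (show MvPowerSeries (Fin n) K from fun d => MvPowerSeries.coeff d (f (mdeg d + 1))) =
        MvPowerSeries.coeff d (f (mdeg d + 1)) := rfl
    rw [hcL]
    rw [sub_eq_zero] at h2 ⊢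
    exact h2.symm

lemma algebraMap_mvPolynomial_eq (p : MvPolynomial (Fin n) K) :
    algebraMap (MvPolynomial (Fin n) K) (MvPowerSeries (Fin n) K) p =
      MvPolynomial.coeToMvPowerSeries.ringHom p := by
  have : algebraMap (MvPolynomial (Fin n) K) (MvPowerSeries (Fin n) K) p
      = MvPowerSeries.map (algebraMap K K) ↑p := rfl
  rw [this]
  ext d
  simp [MvPowerSeries.coeff_map]

lemma isAlgebraic_iff' (φ : MvPowerSeries (Fin n) K) :
    IsAlgebraicMvPowerSeries φ ↔ IsAlgebraic (MvPolynomial (Fin n) K) φ := by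
  constructor <;> rintro ⟨q, hq0, hq⟩ <;> refine ⟨q, hq0, ?_⟩
  · rw [Polynomial.aeval_def]
    rw [show algebraMap (MvPolynomial (Fin n) K) (MvPowerSeries (Fin n) K) =
      MvPolynomial.coeToMvPowerSeries.ringHom from RingHom.ext algebraMap_mvPolynomial_eq]
    exact hq
  · rw [Polynomial.aeval_def] at hq
    rw [show algebraMap (MvPolynomial (Fin n) K) (MvPowerSeries (Fin n) K) =
      MvPolynomial.coeToMvPowerSeries.ringHom from RingHom.ext algebraMap_mvPolynomial_eq] at hq
    exact hq

/-- The inverse of an algebraic power series is algebraic. -/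
lemma isAlgebraic_of_inv {φ ψ : MvPowerSeries (Fin n) K}
    (h : IsAlgebraicMvPowerSeries φ) (hmul : φ * ψ = 1) :
    IsAlgebraicMvPowerSeries ψ := by
  obtain ⟨q, hq0, hq⟩ := h
  set ρ := (MvPolynomial.coeToMvPowerSeries.ringHom :
    MvPolynomial (Fin n) K →+* MvPowerSeries (Fin n) K)
  set D := q.natDegree with hD
  refine ⟨∑ j ∈ Finset.range (D + 1), Polynomial.C (q.coeff (D - j)) * Polynomial.X ^ j, ?_, ?_⟩
  · intro hzero
    have hc : (∑ j ∈ Finset.range (D + 1),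
        Polynomial.C (q.coeff (D - j)) * Polynomial.X ^ j).coeff 0 = q.coeff D := by
      rw [Polynomial.finset_sum_coeff]
      rw [Finset.sum_eq_single 0]
      · simp
      · intro j _ hj
        simp [Polynomial.coeff_X_pow, hj, Ne.symm hj]
      · simp
    rw [hzero, Polynomial.coeff_zero] at hc
    exact hq0 (Polynomial.leadingCoeff_eq_zero.mp hc.symm)
  · have hψφ : ψ * φ = 1 := by rw [mul_comm]; exact hmul
    have key : ∀ j ∈ Finset.range (D + 1),
        ρ (q.coeff (D - j)) * ψ ^ j = ψ ^ D * (ρ (q.coeff (D - j)) * φ ^ (D - j)) := by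
      intro j hj
      rw [Finset.mem_range] at hj
      have hDsplit : ψ ^ D = ψ ^ j * ψ ^ (D - j) := by rw [← pow_add]; congr 1; omega
      rw [hDsplit]
      have : ψ ^ (D - j) * φ ^ (D - j) = 1 := by rw [← mul_pow, hψφ, one_pow]
      calc ρ (q.coeff (D - j)) * ψ ^ j
          = ψ ^ j * (ρ (q.coeff (D - j)) * 1) := by ring
        _ = ψ ^ j * (ρ (q.coeff (D - j)) * (ψ ^ (D - j) * φ ^ (D - j))) := by rw [this]
        _ = ψ ^ j * ψ ^ (D - j) * (ρ (q.coeff (D - j)) * φ ^ (D - j)) := by ring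
    have heval : Polynomial.eval₂ ρ ψ
        (∑ j ∈ Finset.range (D + 1), Polynomial.C (q.coeff (D - j)) * Polynomial.X ^ j) =
        ∑ j ∈ Finset.range (D + 1), ρ (q.coeff (D - j)) * ψ ^ j := by
      rw [Polynomial.eval₂_finset_sum]
      refine Finset.sum_congr rfl fun j _ => ?_
      rw [Polynomial.eval₂_mul, Polynomial.eval₂_C, Polynomial.eval₂_X_pow]
    rw [heval, Finset.sum_congr rfl key, ← Finset.mul_sum]
    have hreflect : ∑ j ∈ Finset.range (D + 1), ρ (q.coeff (D - j)) * φ ^ (D - j) =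
        ∑ j ∈ Finset.range (D + 1), ρ (q.coeff j) * φ ^ j := by
      have := Finset.sum_range_reflect (fun j => ρ (q.coeff j) * φ ^ j) (D + 1)
      simpa using this
    rw [hreflect, ← Polynomial.eval₂_eq_sum_range, hq, mul_zero]

set_option synthInstance.maxHeartbeats 1000000 in
set_option maxHeartbeats 2000000 in
/-- A root of a monic polynomial whose coefficients are algebraic power series is
itself algebraic. -/
lemma isAlgebraic_of_integral {F : Polynomial (MvPowerSeries (Fin n) K)} (hF : F.Monic)
    (hcoeff : ∀ j, IsAlgebraic (MvPolynomial (Fin n) K) (F.coeff j))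
    {b : MvPowerSeries (Fin n) K} (hb : F.eval b = 0) :
    IsAlgebraic (MvPolynomial (Fin n) K) b := by
  haveI : IsDomain (MvPowerSeries (Fin n) K) := NoZeroDivisors.to_isDomain _
  have hPS : Function.Injective
      (algebraMap (MvPolynomial (Fin n) K) (MvPowerSeries (Fin n) K)) := by
    intro x y hxy
    rw [algebraMap_mvPolynomial_eq, algebraMap_mvPolynomial_eq] at hxy
    exact MvPolynomial.coe_injective _ _ hxy
  have hSL : Function.Injective
      (algebraMap (MvPowerSeries (Fin n) K) (FractionRing (MvPowerSeries (Fin n) K))) :=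
    IsFractionRing.injective _ _
  haveI : Module.IsTorsionFree (MvPolynomial (Fin n) K)
      (FractionRing (MvPowerSeries (Fin n) K)) := Module.isTorsionFree_iff_algebraMap_injective.mpr
    (by rw [IsScalarTower.algebraMap_eq (MvPolynomial (Fin n) K) (MvPowerSeries (Fin n) K)
          (FractionRing (MvPowerSeries (Fin n) K))]
        exact hSL.comp hPS)
  letI : Algebra (FractionRing (MvPolynomial (Fin n) K))
      (FractionRing (MvPowerSeries (Fin n) K)) :=
    FractionRing.liftAlgebra (MvPolynomial (Fin n) K) (FractionRing (MvPowerSeries (Fin n) K))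
  haveI : IsScalarTower (MvPolynomial (Fin n) K) (FractionRing (MvPolynomial (Fin n) K))
      (FractionRing (MvPowerSeries (Fin n) K)) :=
    FractionRing.isScalarTower_liftAlgebra _ _
  set ι := algebraMap (MvPowerSeries (Fin n) K) (FractionRing (MvPowerSeries (Fin n) K)) with hι
  set G := F.map ι with hG
  have hGmonic : G.Monic := hF.map ι
  have hGb : G.eval (ι b) = 0 := by
    rw [hG, Polynomial.eval_map, Polynomial.eval₂_hom, hb, map_zero]
  have hcoefL : ∀ y ∈ Set.range G.coeff,
      IsIntegral (FractionRing (MvPolynomial (Fin n) K)) y := by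
    rintro y ⟨j, rfl⟩
    have h1 : IsAlgebraic (MvPolynomial (Fin n) K) (G.coeff j) := by
      rw [hG, Polynomial.coeff_map]
      obtain ⟨p, hp0, hp⟩ := hcoeff j
      exact ⟨p, hp0, by rw [Polynomial.aeval_algebraMap_apply, hp, map_zero]⟩
    exact isAlgebraic_iff_isIntegral.mp
      ((IsFractionRing.isAlgebraic_iff (MvPolynomial (Fin n) K)
        (FractionRing (MvPolynomial (Fin n) K))
        (FractionRing (MvPowerSeries (Fin n) K))).mp h1)
  set E := IntermediateField.adjoin (FractionRing (MvPolynomial (Fin n) K))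
    (Set.range G.coeff) with hE
  haveI : Algebra.IsAlgebraic (FractionRing (MvPolynomial (Fin n) K)) E :=
    IntermediateField.isAlgebraic_adjoin hcoefL
  haveI : Algebra.IsIntegral (FractionRing (MvPolynomial (Fin n) K)) E :=
    Algebra.IsAlgebraic.isIntegral
  have hcoe : ∀ j, G.coeff j ∈ E := fun j =>
    IntermediateField.subset_adjoin _ _ ⟨j, rfl⟩
  set p : Polynomial E := ∑ j ∈ Finset.range (G.natDegree + 1),
    Polynomial.C (⟨G.coeff j, hcoe j⟩ : E) * Polynomial.X ^ j with hp
  have hpmap : p.map (algebraMap E (FractionRing (MvPowerSeries (Fin n) K))) = G := by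
    conv_rhs => rw [G.as_sum_range' (G.natDegree + 1) (lt_add_one _)]
    rw [hp, Polynomial.map_sum]
    refine Finset.sum_congr rfl fun j _ => ?_
    rw [Polynomial.map_mul, Polynomial.map_C, Polynomial.map_pow, Polynomial.map_X,
      Polynomial.C_mul_X_pow_eq_monomial]
    rfl
  have hp0 : p ≠ 0 := by
    intro h
    apply hGmonic.ne_zero
    rw [← hpmap, h, Polynomial.map_zero]
  have hpx : Polynomial.aeval (ι b) p = 0 := by
    rw [Polynomial.aeval_def, Polynomial.eval₂_eq_eval_map, hpmap]
    exact hGb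
  have hxE : IsIntegral E (ι b) := isAlgebraic_iff_isIntegral.mp ⟨p, hp0, hpx⟩
  have hxF0 : IsIntegral (FractionRing (MvPolynomial (Fin n) K)) (ι b) :=
    isIntegral_trans _ hxE
  have hxP : IsAlgebraic (MvPolynomial (Fin n) K) (ι b) :=
    (IsFractionRing.isAlgebraic_iff (MvPolynomial (Fin n) K)
      (FractionRing (MvPolynomial (Fin n) K))
      (FractionRing (MvPowerSeries (Fin n) K))).mpr hxF0.isAlgebraic
  obtain ⟨q, hq0, hq⟩ := hxP
  refine ⟨q, hq0, hSL ?_⟩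
  rw [← Polynomial.aeval_algebraMap_apply, hq, map_zero]

/-- If an element of `A` is invertible as a power series, it is invertible in `A`. -/
lemma isUnit_subring {A : Subring (MvPowerSeries (Fin n) K)}
    (hA : ∀ φ, φ ∈ A ↔ IsAlgebraicMvPowerSeries φ)
    (a : A) (h : IsUnit (a : MvPowerSeries (Fin n) K)) : IsUnit a := by
  obtain ⟨u, hu⟩ := h
  have hmul : (a : MvPowerSeries (Fin n) K) * ↑u⁻¹ = 1 := by
    rw [← hu]; exact u.mul_inv
  have hψ : (↑u⁻¹ : MvPowerSeries (Fin n) K) ∈ A :=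
    (hA _).mpr (isAlgebraic_of_inv ((hA _).mp a.2) hmul)
  refine IsUnit.of_mul_eq_one (a := a) ⟨↑u⁻¹, hψ⟩ ?_
  exact Subtype.ext hmul

lemma isUnit_subring_iff {A : Subring (MvPowerSeries (Fin n) K)}
    (hA : ∀ φ, φ ∈ A ↔ IsAlgebraicMvPowerSeries φ) (a : A) :
    IsUnit a ↔ IsUnit (a : MvPowerSeries (Fin n) K) :=
  ⟨fun h => h.map A.subtype, isUnit_subring hA a⟩

lemma nontrivial_subring (A : Subring (MvPowerSeries (Fin n) K)) : Nontrivial A :=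
  ⟨0, 1, fun h => by
    have := congrArg (Subtype.val) h
    simp only [OneMemClass.coe_one, ZeroMemClass.coe_zero] at this
    exact zero_ne_one this⟩

lemma isLocalRing_subring {A : Subring (MvPowerSeries (Fin n) K)}
    (hA : ∀ φ, φ ∈ A ↔ IsAlgebraicMvPowerSeries φ) : IsLocalRing A := by
  haveI := nontrivial_subring A
  refine IsLocalRing.of_isUnit_or_isUnit_one_sub_self fun a => ?_
  by_cases hc : MvPowerSeries.constantCoeff (a : MvPowerSeries (Fin n) K) = 0
  · right
    refine isUnit_subring hA (1 - a) ?_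
    rw [MvPowerSeries.isUnit_iff_constantCoeff]
    have h1 : ((1 - a : A) : MvPowerSeries (Fin n) K) = 1 - (a : MvPowerSeries (Fin n) K) := rfl
    rw [h1, map_sub, map_one, hc, sub_zero]
    exact isUnit_one
  · left
    exact isUnit_subring hA a (MvPowerSeries.isUnit_iff_constantCoeff.mpr
      (isUnit_iff_ne_zero.mpr hc))

lemma henselian_subring {A : Subring (MvPowerSeries (Fin n) K)}
    (hA : ∀ φ, φ ∈ A ↔ IsAlgebraicMvPowerSeries φ) : HenselianLocalRing A := by
  haveI := isLocalRing_subring hA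
  constructor
  intro f hf a₀ h₁ h₂
  -- map everything to the power series ring
  set F := f.map A.subtype with hFdef
  have hFmonic : F.Monic := hf.map A.subtype
  have hFeval : ∀ x : A, F.eval (x : MvPowerSeries (Fin n) K) = ↑(f.eval x) := by
    intro x
    rw [hFdef, Polynomial.eval_map]
    exact Polynomial.eval₂_at_apply A.subtype x
  have hFa₀ : F.eval (a₀ : MvPowerSeries (Fin n) K) ∈
      IsLocalRing.maximalIdeal (MvPowerSeries (Fin n) K) := by
    rw [hFeval, IsLocalRing.mem_maximalIdeal, mem_nonunits_iff]
    intro hu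
    exact mem_nonunits_iff.mp ((IsLocalRing.mem_maximalIdeal _).mp h₁)
      (isUnit_subring hA _ hu)
  have hFd : IsUnit (Ideal.Quotient.mk (IsLocalRing.maximalIdeal (MvPowerSeries (Fin n) K))
      (F.derivative.eval (a₀ : MvPowerSeries (Fin n) K))) := by
    have hd : F.derivative = (f.derivative).map A.subtype := by
      rw [hFdef, Polynomial.derivative_map]
    have hd2 : (f.derivative.map A.subtype).eval (a₀ : MvPowerSeries (Fin n) K) =
        ↑(f.derivative.eval a₀) := by
      rw [Polynomial.eval_map]
      exact Polynomial.eval₂_at_apply A.subtype a₀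
    rw [hd, hd2]
    exact ((h₂.map A.subtype).map _)
  obtain ⟨b, hbroot, hbmod⟩ := HenselianRing.is_henselian F hFmonic
    (a₀ : MvPowerSeries (Fin n) K) hFa₀ hFd
  -- the root is algebraic
  have hbA : b ∈ A := by
    rw [hA, isAlgebraic_iff']
    refine isAlgebraic_of_integral hFmonic (fun j => ?_) hbroot
    have hcj : F.coeff j = ((f.coeff j : A) : MvPowerSeries (Fin n) K) := by
      rw [hFdef, Polynomial.coeff_map]; rfl
    rw [hcj, ← isAlgebraic_iff']
    exact (hA _).mp (f.coeff j).2
  refine ⟨⟨b, hbA⟩, ?_, ?_⟩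
  · have h3 : ((f.eval ⟨b, hbA⟩ : A) : MvPowerSeries (Fin n) K) = F.eval b :=
      (hFeval ⟨b, hbA⟩).symm
    have h0 : ((f.eval ⟨b, hbA⟩ : A) : MvPowerSeries (Fin n) K) = 0 := by
      rw [h3]; exact hbroot
    exact Subtype.ext h0
  · rw [IsLocalRing.mem_maximalIdeal, mem_nonunits_iff]
    intro hu
    have h4 := (isUnit_subring_iff hA _).mp hu
    have hval : ((⟨b, hbA⟩ - a₀ : A) : MvPowerSeries (Fin n) K) =
        b - (a₀ : MvPowerSeries (Fin n) K) := rfl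
    rw [hval] at h4
    exact (mem_nonunits_iff.mp ((IsLocalRing.mem_maximalIdeal _).mp hbmod)) h4

section Subst

variable (r : Fin n → ℕ)

/-- pointwise scaling of a multi-index -/
noncomputable def scaleIdx (d : Fin n →₀ ℕ) : Fin n →₀ ℕ :=
  Finsupp.equivFunOnFinite.symm fun i => r i * d i

/-- pointwise quotient of a multi-index -/
noncomputable def quotIdx (d : Fin n →₀ ℕ) : Fin n →₀ ℕ :=
  Finsupp.equivFunOnFinite.symm fun i => d i / r i

@[simp] lemma scaleIdx_apply (d : Fin n →₀ ℕ) (i : Fin n) : scaleIdx r d i = r i * d i := rfl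
@[simp] lemma quotIdx_apply (d : Fin n →₀ ℕ) (i : Fin n) : quotIdx r d i = d i / r i := rfl

lemma scaleIdx_add (e f : Fin n →₀ ℕ) :
    scaleIdx r (e + f) = scaleIdx r e + scaleIdx r f := by
  ext i; simp [mul_add]

lemma quotIdx_scaleIdx (hr : ∀ i, 0 < r i) (d : Fin n →₀ ℕ) :
    quotIdx r (scaleIdx r d) = d := by
  ext i; simp [Nat.mul_div_cancel_left _ (hr i)]

lemma scaleIdx_quotIdx {d : Fin n →₀ ℕ} (hdvd : ∀ i, r i ∣ d i) :
    scaleIdx r (quotIdx r d) = d := by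
  ext i; simp [Nat.mul_div_cancel' (hdvd i)]

lemma scaleIdx_injective (hr : ∀ i, 0 < r i) : Function.Injective (scaleIdx r) := by
  intro x y h
  rw [← quotIdx_scaleIdx r hr x, ← quotIdx_scaleIdx r hr y, h]

lemma dvd_scaleIdx (d : Fin n →₀ ℕ) (i : Fin n) : r i ∣ scaleIdx r d i := dvd_mul_right _ _

lemma quotIdx_eq_zero_iff (hr : ∀ i, 0 < r i) {d : Fin n →₀ ℕ} (hdvd : ∀ i, r i ∣ d i) :
    quotIdx r d = 0 ↔ d = 0 := by
  constructor
  · intro h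
    ext i
    have h1 : d i / r i = 0 := by
      have := congrArg (fun g => g i) h
      simpa using this
    have := Nat.eq_zero_of_dvd_of_lt (hdvd i) ((Nat.div_eq_zero_iff_lt (hr i)).mp h1)
    · simpa using this
  · rintro rfl; ext i; simp

lemma coeff_mvPowSubst (φ : MvPowerSeries (Fin n) K) (d : Fin n →₀ ℕ) :
    MvPowerSeries.coeff d (mvPowSubst r φ) =
      if ∀ i, r i ∣ d i then MvPowerSeries.coeff (quotIdx r d) φ else 0 := rfl

lemma coeff_mvPowSubst_scale (hr : ∀ i, 0 < r i) (φ : MvPowerSeries (Fin n) K)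
    (e : Fin n →₀ ℕ) :
    MvPowerSeries.coeff (scaleIdx r e) (mvPowSubst r φ) = MvPowerSeries.coeff e φ := by
  rw [coeff_mvPowSubst, if_pos (dvd_scaleIdx r e), quotIdx_scaleIdx r hr]

lemma mvPowSubst_injective (hr : ∀ i, 0 < r i) :
    Function.Injective (mvPowSubst r : MvPowerSeries (Fin n) K → MvPowerSeries (Fin n) K) := by
  intro φ ψ h
  ext e
  rw [← coeff_mvPowSubst_scale r hr φ e, ← coeff_mvPowSubst_scale r hr ψ e, h]

lemma mvPowSubst_one (hr : ∀ i, 0 < r i) :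
    mvPowSubst r (1 : MvPowerSeries (Fin n) K) = 1 := by
  ext d
  rw [coeff_mvPowSubst]
  by_cases hdvd : ∀ i, r i ∣ d i
  · rw [if_pos hdvd, MvPowerSeries.coeff_one, MvPowerSeries.coeff_one,
      if_congr (quotIdx_eq_zero_iff r hr hdvd) rfl rfl]
  · rw [if_neg hdvd, MvPowerSeries.coeff_one, if_neg]
    rintro rfl
    exact hdvd fun i => dvd_zero _

lemma mvPowSubst_mul (hr : ∀ i, 0 < r i) (φ ψ : MvPowerSeries (Fin n) K) :
    mvPowSubst r (φ * ψ) = mvPowSubst r φ * mvPowSubst r ψ := by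
  ext d
  rw [coeff_mvPowSubst, MvPowerSeries.coeff_mul]
  by_cases hdvd : ∀ i, r i ∣ d i
  · rw [if_pos hdvd, MvPowerSeries.coeff_mul]
    set q := quotIdx r d with hq
    have hsubset : ∀ p ∈ Finset.HasAntidiagonal.antidiagonal d,
        p ∉ (Finset.HasAntidiagonal.antidiagonal d).filter (fun p : (Fin n →₀ ℕ) × (Fin n →₀ ℕ) =>
          ∀ i, r i ∣ p.1 i) →
        MvPowerSeries.coeff p.1 (mvPowSubst r φ) *
          MvPowerSeries.coeff p.2 (mvPowSubst r ψ) = 0 := by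
      intro p hp hnp
      have h1 : ¬ ∀ i, r i ∣ p.1 i := by
        intro h1
        exact hnp (Finset.mem_filter.mpr ⟨hp, h1⟩)
      rw [coeff_mvPowSubst, if_neg h1, zero_mul]
    rw [← Finset.sum_subset (Finset.filter_subset _ _) hsubset]
    refine Finset.sum_nbij' (fun u => (scaleIdx r u.1, scaleIdx r u.2))
      (fun p => (quotIdx r p.1, quotIdx r p.2)) ?_ ?_ ?_ ?_ ?_
    · rintro ⟨u, v⟩ hu
      rw [Finset.HasAntidiagonal.mem_antidiagonal] at hu
      refine Finset.mem_filter.mpr ⟨?_, fun i => dvd_scaleIdx r u i⟩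
      rw [Finset.HasAntidiagonal.mem_antidiagonal, ← scaleIdx_add, hu, scaleIdx_quotIdx r hdvd]
    · rintro ⟨e, f⟩ hp
      obtain ⟨hef, h1⟩ := Finset.mem_filter.mp hp
      rw [Finset.HasAntidiagonal.mem_antidiagonal] at hef
      have h2 : ∀ i, r i ∣ f i := by
        intro i
        have : e i + f i = d i := by rw [← hef]; rfl
        have h3 : f i = d i - e i := by omega
        rw [h3]
        exact Nat.dvd_sub (hdvd i) (h1 i)
      rw [Finset.HasAntidiagonal.mem_antidiagonal]
      apply scaleIdx_injective r hr
      rw [scaleIdx_add, scaleIdx_quotIdx r h1, scaleIdx_quotIdx r h2,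
        scaleIdx_quotIdx r hdvd, hef]
    · rintro ⟨u, v⟩ _
      simp only [Prod.mk.injEq]
      exact ⟨quotIdx_scaleIdx r hr u, quotIdx_scaleIdx r hr v⟩
    · rintro ⟨e, f⟩ hp
      obtain ⟨hef, h1⟩ := Finset.mem_filter.mp hp
      rw [Finset.HasAntidiagonal.mem_antidiagonal] at hef
      have h2 : ∀ i, r i ∣ f i := by
        intro i
        have : e i + f i = d i := by rw [← hef]; rfl
        have h3 : f i = d i - e i := by omega
        rw [h3]
        exact Nat.dvd_sub (hdvd i) (h1 i)
      simp only [Prod.mk.injEq]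
      exact ⟨scaleIdx_quotIdx r h1, scaleIdx_quotIdx r h2⟩
    · rintro ⟨u, v⟩ _
      rw [coeff_mvPowSubst_scale r hr, coeff_mvPowSubst_scale r hr]
  · rw [if_neg hdvd]
    symm
    apply Finset.sum_eq_zero
    rintro ⟨e, f⟩ hef
    simp only [Finset.HasAntidiagonal.mem_antidiagonal] at hef
    by_cases h1 : ∀ i, r i ∣ e i
    · have h2 : ¬ ∀ i, r i ∣ f i := by
        intro h2
        apply hdvd
        intro i
        have : e i + f i = d i := by rw [← hef]; rfl
        rw [← this]
        exact dvd_add (h1 i) (h2 i)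
      rw [coeff_mvPowSubst r ψ, if_neg h2, mul_zero]
    · rw [coeff_mvPowSubst r φ, if_neg h1, zero_mul]

lemma mvPowSubst_add (φ ψ : MvPowerSeries (Fin n) K) :
    mvPowSubst r (φ + ψ) = mvPowSubst r φ + mvPowSubst r ψ := by
  ext d
  rw [map_add, coeff_mvPowSubst, coeff_mvPowSubst, coeff_mvPowSubst]
  by_cases hdvd : ∀ i, r i ∣ d i
  · rw [if_pos hdvd, if_pos hdvd, if_pos hdvd, map_add]
  · rw [if_neg hdvd, if_neg hdvd, if_neg hdvd, add_zero]

/-- The substitution `Xᵢ ↦ Xᵢ^{rᵢ}` as a ring homomorphism. -/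
noncomputable def substHom (hr : ∀ i, 0 < r i) :
    MvPowerSeries (Fin n) K →+* MvPowerSeries (Fin n) K :=
  RingHom.mk' (MonoidHom.mk ⟨mvPowSubst r, mvPowSubst_one r hr⟩ (mvPowSubst_mul r hr))
    (mvPowSubst_add r)

lemma substHom_apply (hr : ∀ i, 0 < r i) (φ : MvPowerSeries (Fin n) K) :
    substHom r hr φ = mvPowSubst r φ := by
  rfl

lemma mvPowSubst_X (hr : ∀ i, 0 < r i) (i : Fin n) :
    mvPowSubst r (MvPowerSeries.X i : MvPowerSeries (Fin n) K) = MvPowerSeries.X i ^ r i := by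
  ext d
  rw [coeff_mvPowSubst, MvPowerSeries.coeff_X_pow]
  by_cases hdvd : ∀ j, r j ∣ d j
  · rw [if_pos hdvd, MvPowerSeries.coeff_X]
    have hiff : quotIdx r d = Finsupp.single i 1 ↔ d = Finsupp.single i (r i) := by
      constructor
      · intro h
        have := congrArg (scaleIdx r) h
        rw [scaleIdx_quotIdx r hdvd] at this
        rw [this]
        ext j
        simp only [scaleIdx_apply, Finsupp.single_apply]
        by_cases hij : i = j
        · subst hij; simp
        · simp [hij]
      · rintro rfl
        ext j
        simp only [quotIdx_apply, Finsupp.single_apply]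
        by_cases hij : i = j
        · subst hij; simp [Nat.div_self (hr i)]
        · simp [hij]
    rw [if_congr hiff rfl rfl]
  · rw [if_neg hdvd, if_neg]
    rintro rfl
    apply hdvd
    intro j
    simp only [Finsupp.single_apply]
    by_cases hij : i = j
    · subst hij; simp
    · simp [hij]

lemma mvPowSubst_C (hr : ∀ i, 0 < r i) (c : K) :
    mvPowSubst r (MvPowerSeries.C (σ := Fin n) (R := K) c) = MvPowerSeries.C (σ := Fin n) (R := K) c := by
  ext d
  rw [coeff_mvPowSubst]
  by_cases hdvd : ∀ i, r i ∣ d i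
  · rw [if_pos hdvd]
    have h1 : ∀ e, MvPowerSeries.coeff e (MvPowerSeries.C (σ := Fin n) (R := K) c)
        = if e = 0 then c else 0 := by
      intro e
      rw [show MvPowerSeries.C (σ := Fin n) (R := K) c = MvPowerSeries.monomial 0 c from rfl,
        MvPowerSeries.coeff_monomial]
    rw [h1, h1, if_congr (quotIdx_eq_zero_iff r hr hdvd) rfl rfl]
  · rw [if_neg hdvd]
    rw [show MvPowerSeries.C (σ := Fin n) (R := K) c = MvPowerSeries.monomial 0 c from rfl,
      MvPowerSeries.coeff_monomial, if_neg]
    rintro rfl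
    exact hdvd fun i => dvd_zero _

/-- Substitution on polynomials -/
noncomputable def substPoly : MvPolynomial (Fin n) K →+* MvPolynomial (Fin n) K :=
  (MvPolynomial.aeval fun i => MvPolynomial.X i ^ r i : MvPolynomial (Fin n) K →ₐ[K]
    MvPolynomial (Fin n) K).toRingHom

lemma substHom_comm (hr : ∀ i, 0 < r i) :
    (substHom r hr).comp (MvPolynomial.coeToMvPowerSeries.ringHom :
        MvPolynomial (Fin n) K →+* MvPowerSeries (Fin n) K) =
      (MvPolynomial.coeToMvPowerSeries.ringHom).comp (substPoly r) := by
  apply MvPolynomial.ringHom_ext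
  · intro c
    rw [RingHom.comp_apply, RingHom.comp_apply]
    rw [show (substPoly r) (MvPolynomial.C c) = MvPolynomial.C c from MvPolynomial.aeval_C _ c]
    show substHom r hr ((MvPolynomial.C c : MvPolynomial (Fin n) K) :
      MvPowerSeries (Fin n) K) = _
    rw [MvPolynomial.coe_C, substHom_apply, mvPowSubst_C r hr,
      MvPolynomial.coeToMvPowerSeries.ringHom_apply, MvPolynomial.coe_C]
  · intro i
    rw [RingHom.comp_apply, RingHom.comp_apply]
    rw [show (substPoly r) (MvPolynomial.X i) = MvPolynomial.X i ^ r i from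
      MvPolynomial.aeval_X _ i]
    show substHom r hr ((MvPolynomial.X i : MvPolynomial (Fin n) K) :
      MvPowerSeries (Fin n) K) = ((MvPolynomial.X i ^ r i : MvPolynomial (Fin n) K) :
      MvPowerSeries (Fin n) K)
    rw [MvPolynomial.coe_X, substHom_apply, mvPowSubst_X r hr,
      MvPolynomial.coe_pow, MvPolynomial.coe_X]

lemma substPoly_injective (hr : ∀ i, 0 < r i) : Function.Injective (substPoly r
    : MvPolynomial (Fin n) K → MvPolynomial (Fin n) K) := by
  intro x y h
  have h1 : (substHom r hr) (MvPolynomial.coeToMvPowerSeries.ringHom x) =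
      (substHom r hr) (MvPolynomial.coeToMvPowerSeries.ringHom y) := by
    rw [← RingHom.comp_apply, ← RingHom.comp_apply, substHom_comm r hr,
      RingHom.comp_apply, RingHom.comp_apply, h]
  rw [substHom_apply, substHom_apply] at h1
  have h2 := mvPowSubst_injective r hr h1
  exact MvPolynomial.coe_injective _ _ h2

end Subst

end AlgPS

/-- The ring of algebraic power series is a Henselian local ring, closed under power
substitutions `Xᵢ ↦ Xᵢ^{rᵢ}` and under division by a coordinate. -/
theorem algebraic_power_series_henselian_local_closed
    {K : Type*} [Field K] {n : ℕ}
    (A : Subring (MvPowerSeries (Fin n) K))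
    (hA : ∀ φ, φ ∈ A ↔ IsAlgebraicMvPowerSeries φ) :
    HenselianLocalRing ↥A ∧
    (∀ φ ∈ A, ∀ r : Fin n → ℕ, (∀ i, 0 < r i) → mvPowSubst r φ ∈ A) ∧
    (∀ φ ∈ A, ∀ (i : Fin n) (ψ : MvPowerSeries (Fin n) K),
      φ = MvPowerSeries.X i * ψ → ψ ∈ A) := by
  refine ⟨AlgPS.henselian_subring hA, ?_, ?_⟩
  · -- closure under power substitutions
    intro φ hφ r hr
    rw [hA] at hφ ⊢
    obtain ⟨q, hq0, hq⟩ := hφ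
    refine ⟨q.map (AlgPS.substPoly r), ?_, ?_⟩
    · intro h
      exact hq0 ((Polynomial.map_eq_zero_iff (AlgPS.substPoly_injective r hr)).mp h)
    · have h1 : mvPowSubst r φ = AlgPS.substHom r hr φ := (AlgPS.substHom_apply r hr φ).symm
      rw [h1, Polynomial.eval₂_map, ← AlgPS.substHom_comm r hr, ← Polynomial.hom_eval₂, hq,
        map_zero]
  · -- closure under division by a coordinate
    intro φ hφ i ψ hψeq
    rw [hA] at hφ ⊢
    obtain ⟨q, hq0, hq⟩ := hφ
    set D := q.natDegree with hD
    refine ⟨∑ j ∈ Finset.range (D + 1),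
      Polynomial.C (q.coeff j * MvPolynomial.X i ^ j) * Polynomial.X ^ j, ?_, ?_⟩
    · intro h
      have hc : (∑ j ∈ Finset.range (D + 1),
          Polynomial.C (q.coeff j * MvPolynomial.X i ^ j) * Polynomial.X ^ j).coeff D =
          q.coeff D * MvPolynomial.X i ^ D := by
        rw [Polynomial.finset_sum_coeff, Finset.sum_eq_single D]
        · rw [Polynomial.coeff_C_mul, Polynomial.coeff_X_pow, if_pos rfl, mul_one]
        · intro j _ hne
          rw [Polynomial.coeff_C_mul, Polynomial.coeff_X_pow, if_neg (Ne.symm hne), mul_zero]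
        · intro hD'
          exact absurd (Finset.self_mem_range_succ D) hD'
      rw [h, Polynomial.coeff_zero] at hc
      have hlc : q.coeff D ≠ 0 := Polynomial.leadingCoeff_ne_zero.mpr hq0
      exact (mul_ne_zero hlc (pow_ne_zero _ (MvPolynomial.X_ne_zero (R := K) i))) hc.symm
    · have heval : Polynomial.eval₂ MvPolynomial.coeToMvPowerSeries.ringHom ψ
          (∑ j ∈ Finset.range (D + 1),
            Polynomial.C (q.coeff j * MvPolynomial.X i ^ j) * Polynomial.X ^ j) =
          ∑ j ∈ Finset.range (D + 1),
            MvPolynomial.coeToMvPowerSeries.ringHom (q.coeff j) * φ ^ j := by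
        rw [Polynomial.eval₂_finset_sum]
        refine Finset.sum_congr rfl fun j _ => ?_
        rw [Polynomial.eval₂_mul, Polynomial.eval₂_C, Polynomial.eval₂_X_pow, map_mul, map_pow]
        rw [show MvPolynomial.coeToMvPowerSeries.ringHom (MvPolynomial.X i : MvPolynomial (Fin n) K)
          = MvPowerSeries.X i from MvPolynomial.coe_X i]
        rw [mul_assoc, ← mul_pow, ← hψeq]
      rw [heval, ← Polynomial.eval₂_eq_sum_range]
      exact hq
end

section
/- Let K be a Henselian valued field of equicharacteristic zero and K̄ its algebraic closure, equipped with an extension of the valuation. Then K is a closed subset of K̄ in the valuation topology. -/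
open Polynomial Valued Filter

section Helpers
variable {K : Type*} [Field K] {Γ₀ : Type*} [LinearOrderedCommGroupWithZero Γ₀]
  [Valued K Γ₀]

lemma isUnit_iff_val (u : ((Valued.v : Valuation K Γ₀).valuationSubring)) :
    IsUnit u ↔ Valued.v (u : K) = (1 : Γ₀) := by
  constructor
  · rintro ⟨⟨a, b, hab, hba⟩, rfl⟩
    have h1 : Valued.v ((a : K) * (b : K)) = 1 := by
      rw [← Subring.coe_mul]
      rw [hab]
      simp
    rw [Valuation.map_mul] at h1
    have ha := a.2
    have hb := b.2
    refine le_antisymm ha ?_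
    calc (1 : Γ₀) = Valued.v (a : K) * Valued.v (b : K) := h1.symm
    _ ≤ Valued.v (a : K) * 1 := mul_le_mul_right hb _
    _ = Valued.v (a : K) := mul_one _
  · intro h
    have hu : (u : K) ≠ 0 := by
      intro h0
      rw [h0] at h; simp at h
    have hinv : ((u : K)⁻¹) ∈ (Valued.v : Valuation K Γ₀).valuationSubring := by
      rw [Valuation.mem_valuationSubring_iff, map_inv₀, h]
      simp
    refine IsUnit.of_mul_eq_one (a := u) ⟨(u : K)⁻¹, hinv⟩ ?_
    ext
    push_cast
    exact mul_inv_cancel₀ hu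

lemma mem_maxIdeal_iff_val (u : ((Valued.v : Valuation K Γ₀).valuationSubring)) :
    u ∈ IsLocalRing.maximalIdeal ((Valued.v : Valuation K Γ₀).valuationSubring) ↔
      Valued.v (u : K) < 1 := by
  rw [IsLocalRing.mem_maximalIdeal, mem_nonunits_iff, isUnit_iff_val]
  exact ⟨fun h => lt_of_le_of_ne u.2 h, fun h => ne_of_lt h⟩

lemma val_natCast_le_one (m : ℕ) : Valued.v ((m : K)) ≤ (1 : Γ₀) := by
  induction m with
  | zero => simp
  | succ k ih =>
      push_cast
      calc Valued.v ((k : K) + 1) ≤ max (Valued.v (k : K)) (Valued.v (1 : K)) :=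
        Valuation.map_add _ _ _
      _ ≤ 1 := by simp [ih]

lemma key_newton [HenselianLocalRing ((Valued.v : Valuation K Γ₀).valuationSubring)]
    [CharZero K]
    (f : K[X]) (hn : 2 ≤ f.natDegree) (a : K)
    (e : ℕ → K) (he : ∀ i, e i = (Polynomial.taylor a f).coeff i)
    (he0 : e 0 ≠ 0) (he1 : e 1 ≠ 0)
    (hd : ∀ i, 2 ≤ i → i ≤ f.natDegree →
      Valued.v (e i * e 1 ^ (i - 2) * (e 0 / e 1 ^ 2) ^ (i - 1)) < 1) :
    ∃ b : K, f.eval b = 0 := by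
  classical
  set v : Valuation K Γ₀ := Valued.v
  set O := v.valuationSubring with hO
  set n := f.natDegree with hndef
  set t : K := e 0 / e 1 ^ 2 with ht_def
  have ht : t ≠ 0 := div_ne_zero he0 (pow_ne_zero _ he1)
  set d : ℕ → K := fun i => if i ≤ 1 then 1 else e i * e 1 ^ (i - 2) * t ^ (i - 1) with hd_def
  have hezero : ∀ i, n < i → e i = 0 := by
    intro i hi
    rw [he]
    exact coeff_eq_zero_of_natDegree_lt (by rwa [natDegree_taylor])
  have hdlt : ∀ i, 2 ≤ i → v (d i) < 1 := by
    intro i hi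
    simp only [hd_def, if_neg (by omega : ¬ i ≤ 1)]
    by_cases hin : i ≤ n
    · exact hd i hi hin
    · rw [hezero i (by omega)]
      simp
  have hdO : ∀ i, d i ∈ O := by
    intro i
    by_cases hi : i ≤ 1
    · rw [hd_def]; simp only [hi, if_true]; exact one_mem O
    · exact le_of_lt (hdlt i (by omega))
  set D : ℕ → O := fun i => ⟨d i, hdO i⟩ with hD_def
  have hd0 : d 0 = 1 := by simp [hd_def]
  have hd1 : d 1 = 1 := by simp [hd_def]
  -- the reversed polynomial over O
  set H : Polynomial O := X ^ n + ∑ i ∈ Finset.Icc 1 n, Polynomial.C (D i) * X ^ (n - i)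
    with hH_def
  have hHmonic : H.Monic := by
    apply monic_X_pow_add
    apply lt_of_le_of_lt (degree_sum_le _ _)
    rw [Finset.sup_lt_iff (by exact_mod_cast WithBot.bot_lt_coe n)]
    intro i hi
    rw [Finset.mem_Icc] at hi
    apply lt_of_le_of_lt (degree_C_mul_X_pow_le _ _)
    exact_mod_cast Nat.sub_lt_of_pos_le (by omega) (by omega)
  --评估 via coercion to K
  have coe_eval : ∀ (w : O), ((H.eval w : O) : K)
      = (w : K) ^ n + ∑ i ∈ Finset.Icc 1 n, d i * (w : K) ^ (n - i) := by
    intro w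
    rw [hH_def]
    push_cast [eval_add, eval_pow, eval_X, eval_finset_sum, eval_mul, eval_C]
    rfl
  have hIcc : Finset.Icc 1 n = insert 1 (Finset.Icc 2 n) := by
    ext j; simp only [Finset.mem_Icc, Finset.mem_insert]; omega
  have hpow_neg1 : ((-1 : K)) ^ n = (-1 : K) ^ (n - 1) * (-1) := by
    rw [← pow_succ]; congr 1; omega
  have hpow_neg1' : ((-1 : K)) ^ (n - 1) = (-1 : K) ^ (n - 2) * (-1) := by
    rw [← pow_succ]; congr 1; omega
  have hvneg : ∀ k : ℕ, v ((-1 : K) ^ k) = 1 := by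
    intro k
    rw [map_pow, Valuation.map_neg, map_one, one_pow]
  -- first Hensel hypothesis
  have heval1 : v ((H.eval (-1) : O) : K) < 1 := by
    have hcoe : (((-1 : O) : K)) = (-1 : K) := by push_cast; ring
    rw [coe_eval, hcoe, hIcc, Finset.sum_insert (by simp), hd1, one_mul]
    have : (-1 : K) ^ n + ((-1 : K) ^ (n - 1) + ∑ i ∈ Finset.Icc 2 n, d i * (-1 : K) ^ (n - i))
        = ∑ i ∈ Finset.Icc 2 n, d i * (-1 : K) ^ (n - i) := by
      rw [hpow_neg1]; ring
    rw [this]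
    apply Valuation.map_sum_lt _ one_ne_zero
    intro i hi
    rw [Valuation.map_mul, hvneg, mul_one]
    exact hdlt i (by rw [Finset.mem_Icc] at hi; omega)
  -- derivative of H
  have hHder : H.derivative = C ((n : O)) * X ^ (n - 1)
      + ∑ i ∈ Finset.Icc 1 n, C (D i * ((n - i : ℕ) : O)) * X ^ (n - i - 1) := by
    rw [hH_def, derivative_add, derivative_X_pow, derivative_sum]
    congr 1
    apply Finset.sum_congr rfl
    intro i _
    rw [derivative_C_mul_X_pow]
  -- second Hensel hypothesis
  have heval2 : v ((H.derivative.eval (-1) : O) : K) = 1 := by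
    have hcoeval : ((H.derivative.eval (-1) : O) : K)
        = (n : K) * (-1 : K) ^ (n - 1)
          + ∑ i ∈ Finset.Icc 1 n, (d i * ((n - i : ℕ) : K)) * (-1 : K) ^ (n - i - 1) := by
      rw [hHder]
      push_cast [eval_add, eval_pow, eval_X, eval_finset_sum, eval_mul, eval_C]
      rfl
    rw [hcoeval, hIcc, Finset.sum_insert (by simp), hd1, one_mul]
    have hn1 : ((n - 1 : ℕ) : K) = (n : K) - 1 := by
      rw [Nat.cast_sub (by omega)]; simp
    have hmain : (n : K) * (-1 : K) ^ (n - 1)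
        + (((n - 1 : ℕ) : K) * (-1 : K) ^ (n - 1 - 1)) = (-1 : K) ^ (n - 1) := by
      have h2 : n - 1 - 1 = n - 2 := by omega
      rw [h2, hn1, hpow_neg1']
      ring
    have hsplit : (n : K) * (-1 : K) ^ (n - 1)
        + (((n - 1 : ℕ) : K) * (-1 : K) ^ (n - 1 - 1)
          + ∑ i ∈ Finset.Icc 2 n, (d i * ((n - i : ℕ) : K)) * (-1 : K) ^ (n - i - 1))
        = (-1 : K) ^ (n - 1)
          + ∑ i ∈ Finset.Icc 2 n, (d i * ((n - i : ℕ) : K)) * (-1 : K) ^ (n - i - 1) := by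
      rw [← add_assoc, hmain]
    rw [hsplit]
    have hrest : v (∑ i ∈ Finset.Icc 2 n, (d i * ((n - i : ℕ) : K)) * (-1 : K) ^ (n - i - 1))
        < v ((-1 : K) ^ (n - 1)) := by
      rw [hvneg]
      apply Valuation.map_sum_lt _ one_ne_zero
      intro i hi
      rw [Valuation.map_mul, Valuation.map_mul, hvneg, mul_one]
      calc v (d i) * v (((n - i : ℕ) : K)) ≤ v (d i) * 1 :=
        mul_le_mul_right (val_natCast_le_one _) _
      _ = v (d i) := mul_one _
      _ < 1 := hdlt i (by rw [Finset.mem_Icc] at hi; omega)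
    rw [v.map_add_eq_of_lt_left hrest, hvneg]
  -- apply Hensel's lemma
  obtain ⟨w, hwroot, hwmem⟩ := HenselianLocalRing.is_henselian H hHmonic (-1)
    ((mem_maxIdeal_iff_val _).mpr heval1)
    ((isUnit_iff_val _).mpr heval2)
  have hvw1 : v ((w : K) + 1) < 1 := by
    have := (mem_maxIdeal_iff_val _).mp hwmem
    have hc : ((w - (-1) : O) : K) = (w : K) + 1 := by push_cast; ring
    rwa [hc] at this
  have hvw : v (w : K) = 1 := by
    have h1 : v ((-1 : K) + ((w : K) + 1)) = v ((-1 : K)) := by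
      apply Valuation.map_add_eq_of_lt_left
      rw [Valuation.map_neg, map_one]
      exact hvw1
    have h2 : (-1 : K) + ((w : K) + 1) = (w : K) := by ring
    rw [h2] at h1
    rw [h1, Valuation.map_neg, map_one]
  have hwne : (w : K) ≠ 0 := by
    intro h0; rw [h0] at hvw; simp at hvw
  set z : K := (w : K)⁻¹ with hz_def
  have hwz : (w : K) * z = 1 := mul_inv_cancel₀ hwne
  have HKw : (w : K) ^ n + ∑ i ∈ Finset.Icc 1 n, d i * (w : K) ^ (n - i) = 0 := by
    rw [← coe_eval w, hwroot.eq_zero]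
    simp
  refine ⟨e 1 * t * z + a, ?_⟩
  have htaylor : f.eval (e 1 * t * z + a) = (Polynomial.taylor a f).eval (e 1 * t * z) := by
    rw [taylor_eval]
  rw [htaylor]
  have hsum : (Polynomial.taylor a f).eval (e 1 * t * z)
      = ∑ i ∈ Finset.range (n + 1), e i * (e 1 * t * z) ^ i := by
    rw [eval_eq_sum_range' (show (Polynomial.taylor a f).natDegree < n + 1 by
      rw [natDegree_taylor]; omega)]
    apply Finset.sum_congr rfl
    intro i _
    rw [he i]
  rw [hsum]
  have hrange : Finset.range (n + 1) = insert 0 (Finset.Icc 1 n) := by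
    ext j; simp only [Finset.mem_range, Finset.mem_insert, Finset.mem_Icc]; omega
  have he0t : e 0 = e 1 ^ 2 * t := by
    rw [ht_def]; field_simp
  have hterm : ∀ i ∈ Finset.Icc 1 n, e i * (e 1 * t * z) ^ i
      = (e 1 ^ 2 * t * z ^ n) * (d i * (w : K) ^ (n - i)) := by
    intro i hi
    rw [Finset.mem_Icc] at hi
    have hzwi : z ^ n * (w : K) ^ (n - i) = z ^ i := by
      have : z ^ n = z ^ (n - i) * z ^ i := by rw [← pow_add]; congr 1; omega
      rw [this, mul_comm (z ^ (n-i)) (z ^ i), mul_assoc, ← mul_pow,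
        mul_comm z (w : K), hwz, one_pow, mul_one]
    rcases Nat.lt_or_ge i 2 with hi2 | hi2
    · -- i = 1
      have hi1 : i = 1 := by omega
      subst hi1
      rw [hd1]
      have hz1 : z ^ n * (w : K) ^ (n - 1) = z := by simpa using hzwi
      calc e 1 * (e 1 * t * z) ^ 1 = e 1 ^ 2 * t * (z ^ n * (w : K) ^ (n - 1)) := by
            rw [hz1]; ring
      _ = (e 1 ^ 2 * t * z ^ n) * (1 * (w : K) ^ (n - 1)) := by ring
    · have hdi : d i = e i * e 1 ^ (i - 2) * t ^ (i - 1) := by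
        rw [hd_def]; simp only [if_neg (by omega : ¬ i ≤ 1)]
      rw [hdi]
      have he1p : e 1 ^ 2 * e 1 ^ (i - 2) = e 1 ^ i := by
        rw [← pow_add]; congr 1; omega
      have htp : t * t ^ (i - 1) = t ^ i := by
        rw [← pow_succ']; congr 1; omega
      calc e i * (e 1 * t * z) ^ i = e i * (e 1 ^ i * t ^ i * z ^ i) := by
            rw [mul_pow, mul_pow]
      _ = (e 1 ^ 2 * t * z ^ n) * (e i * e 1 ^ (i - 2) * t ^ (i - 1) * (w : K) ^ (n - i)) := by
            rw [show (e 1 ^ 2 * t * z ^ n) * (e i * e 1 ^ (i - 2) * t ^ (i - 1) * (w : K) ^ (n - i))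
              = e i * (e 1 ^ 2 * e 1 ^ (i - 2)) * (t * t ^ (i - 1)) * (z ^ n * (w : K) ^ (n - i))
              by ring, he1p, htp, hzwi]
            ring
  calc ∑ i ∈ Finset.range (n + 1), e i * (e 1 * t * z) ^ i
      = e 0 + ∑ i ∈ Finset.Icc 1 n, e i * (e 1 * t * z) ^ i := by
        rw [hrange, Finset.sum_insert (by simp), pow_zero, mul_one]
  _ = (e 1 ^ 2 * t * z ^ n) * ((w : K) ^ n + ∑ i ∈ Finset.Icc 1 n, d i * (w : K) ^ (n - i)) := by
        rw [mul_add, Finset.mul_sum, Finset.sum_congr rfl hterm, he0t]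
        congr 1
        have : z ^ n * (w : K) ^ n = 1 := by
          rw [← mul_pow, mul_comm z _, hwz, one_pow]
        rw [mul_assoc, this, mul_one]
  _ = 0 := by rw [HKw, mul_zero]

end Helpers

section Main
theorem henselian_valued_field_closed_in_algebraic_closure'
    {K : Type*} [Field K] {Γ₀ Γ₀' : Type*}
    [LinearOrderedCommGroupWithZero Γ₀] [LinearOrderedCommGroupWithZero Γ₀']
    [Valued K Γ₀]
    [HenselianLocalRing ↥((Valued.v : Valuation K Γ₀).valuationSubring)]
    [CharZero K]
    [Valued (AlgebraicClosure K) Γ₀']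
    (ι : Γ₀ →*₀ Γ₀') (hι : StrictMono ι)
    (hext : ∀ x : K,
      Valued.v (algebraMap K (AlgebraicClosure K) x) = ι (Valued.v x)) :
    IsClosed (Set.range (algebraMap K (AlgebraicClosure K))) := by
  classical
  set Kb := AlgebraicClosure K with hKb
  apply isClosed_of_closure_subset
  intro x hx
  by_contra hxS
  have hxS' : x ∉ (algebraMap K Kb).range := by
    simpa [RingHom.mem_range, Set.mem_range] using hxS
  have hint : IsIntegral K x := Algebra.IsIntegral.isIntegral x
  set f := minpoly K x with hf_def
  have hirr : Irreducible f := minpoly.irreducible hint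
  set n := f.natDegree with hn_def
  have hn : 2 ≤ n := (minpoly.two_le_natDegree_iff hint).mpr hxS'
  have hfx : aeval x f = 0 := minpoly.aeval K x
  have hnoroot : ∀ b : K, f.eval b ≠ 0 := by
    intro b hb
    have hdeg := Polynomial.degree_eq_one_of_irreducible_of_root hirr hb
    have h1 : f.natDegree = 1 := natDegree_eq_of_degree_eq_some hdeg
    omega
  have hGx : aeval x (derivative f) ≠ 0 := by
    intro h0
    obtain ⟨p, q, hpq⟩ := hirr.separable
    have hone := congrArg (aeval x) hpq
    simp only [map_add, map_mul, hfx, h0, mul_zero, add_zero, map_one, zero_add] at hone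
    exact one_ne_zero hone.symm
  set γ : Γ₀' := Valued.v (aeval x (derivative f)) with hγ_def
  have hγ : γ ≠ 0 := by
    rw [hγ_def, ne_eq, Valuation.zero_iff]
    exact hGx
  set M : Γ₀' := 1 ⊔ (Finset.range (n + 1)).sup'
      (Finset.nonempty_range_iff.mpr (Nat.succ_ne_zero n))
      (fun i => Valued.v (aeval x (Polynomial.hasseDeriv i f))) with hM_def
  have hM1 : (1 : Γ₀') ≤ M := le_sup_left
  have hM0 : M ≠ 0 := by
    intro h; rw [h] at hM1; simp at hM1
  have hMle : ∀ i ∈ Finset.range (n + 1),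
      Valued.v (aeval x (Polynomial.hasseDeriv i f)) ≤ M := by
    intro i hi
    exact le_trans (Finset.le_sup'
      (fun i => Valued.v (aeval x (Polynomial.hasseDeriv i f))) hi) le_sup_right
  set Cb : Γ₀' := (1 ⊔ γ) ^ n with hC_def
  have hCb1 : (1 : Γ₀') ≤ Cb := one_le_pow_of_one_le' le_sup_left n
  have hCb0 : Cb ≠ 0 := by
    intro h; rw [h] at hCb1; simp at hCb1
  have hMC0 : M * Cb ≠ 0 := mul_ne_zero hM0 hCb0
  set ε : Γ₀' := γ ^ 2 * (M * Cb)⁻¹ with hε_def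
  have hε : ε ≠ 0 := mul_ne_zero (pow_ne_zero _ hγ) (inv_ne_zero hMC0)
  -- eventual statements
  have hεa : ∃ a : Kb, Valued.v a = ε := by
    obtain ⟨j, -, hj⟩ := Finset.exists_mem_eq_sup'
      (Finset.nonempty_range_iff.mpr (Nat.succ_ne_zero n))
      (fun i => Valued.v (aeval x (Polynomial.hasseDeriv i f)))
    have hm : ∃ m : Kb, Valued.v m = M := by
      rw [hM_def, hj]
      rcases le_total (1 : Γ₀') (Valued.v (aeval x (Polynomial.hasseDeriv j f))) with h | h
      · exact ⟨_, (sup_eq_right.mpr h).symm⟩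
      · exact ⟨1, by rw [map_one, sup_eq_left.mpr h]⟩
    have hq : ∃ q : Kb, Valued.v q = 1 ⊔ γ := by
      rcases le_total (1 : Γ₀') γ with h | h
      · exact ⟨aeval x (derivative f), by rw [sup_eq_right.mpr h]⟩
      · exact ⟨1, by rw [map_one, sup_eq_left.mpr h]⟩
    obtain ⟨m, hm⟩ := hm
    obtain ⟨q, hq⟩ := hq
    exact ⟨aeval x (derivative f) ^ 2 * (m * q ^ n)⁻¹,
      by rw [map_mul, map_pow, map_inv₀, map_mul, map_pow, hm, hq]⟩
  have ev1 : ∀ᶠ y in nhds x, Valued.v (aeval y f) < ε := by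
    have hmem : {z : Kb | Valued.v z < ε} ∈ nhds (aeval x f) := by
      rw [hfx, Valued.mem_nhds_zero]
      obtain ⟨a, ha⟩ := hεa
      refine ⟨Units.mk0 (Valued.v.restrict a) (by rw [ne_eq, Valuation.restrict_eq_zero_iff, ha]; exact hε), fun z hz => ?_⟩
      have hz' : Valued.v.restrict z < Valued.v.restrict a := by simpa using hz
      show Valued.v z < ε
      rw [← ha]
      simpa using hz'
    have hpre := (f.continuous_aeval.continuousAt (x := x)).preimage_mem_nhds hmem
    exact eventually_of_mem hpre fun y hy => hy
  have ev2 : ∀ᶠ y in nhds x, Valued.v (aeval y (derivative f)) = γ := by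
    have hmem : {z : Kb | Valued.v (z - aeval x (derivative f)) < γ}
        ∈ nhds (aeval x (derivative f)) := by
      rw [Valued.mem_nhds]
      refine ⟨Units.mk0 (Valued.v.restrict (aeval x (derivative f)))
        (by rw [ne_eq, Valuation.restrict_eq_zero_iff]; exact hγ), fun z hz => ?_⟩
      have hz' : Valued.v.restrict (z - aeval x (derivative f))
          < Valued.v.restrict (aeval x (derivative f)) := by simpa using hz
      show Valued.v (z - aeval x (derivative f)) < γ
      simpa using hz'
    have hpre := ((derivative f).continuous_aeval.continuousAt (x := x)).preimage_mem_nhds hmem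
    refine eventually_of_mem hpre fun y hy => ?_
    have h1 : Valued.v (aeval x (derivative f)
        + (aeval y (derivative f) - aeval x (derivative f)))
        = Valued.v (aeval x (derivative f)) := Valuation.map_add_eq_of_lt_left _ hy
    have h2 : aeval x (derivative f) + (aeval y (derivative f) - aeval x (derivative f))
        = aeval y (derivative f) := by ring
    rw [h2] at h1
    exact h1
  have ev3 : ∀ᶠ y in nhds x, ∀ i ∈ Finset.range (n + 1),
      Valued.v (aeval y (Polynomial.hasseDeriv i f)) ≤ M := by
    rw [Filter.eventually_all_finset]
    intro i hi
    have hmem : {z : Kb | Valued.v (z - aeval x (Polynomial.hasseDeriv i f)) < 1}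
        ∈ nhds (aeval x (Polynomial.hasseDeriv i f)) := by
      rw [Valued.mem_nhds]
      exact ⟨1, fun z hz => (by simpa using hz : Valued.v (z - aeval x (Polynomial.hasseDeriv i f)) < 1)⟩
    have hpre := ((Polynomial.hasseDeriv i f).continuous_aeval.continuousAt
      (x := x)).preimage_mem_nhds hmem
    refine eventually_of_mem hpre fun y hy => ?_
    have h2 : aeval y (Polynomial.hasseDeriv i f)
        = aeval x (Polynomial.hasseDeriv i f)
          + (aeval y (Polynomial.hasseDeriv i f) - aeval x (Polynomial.hasseDeriv i f)) := by
      ring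
    rw [h2]
    calc Valued.v (aeval x (Polynomial.hasseDeriv i f)
          + (aeval y (Polynomial.hasseDeriv i f) - aeval x (Polynomial.hasseDeriv i f)))
        ≤ max (Valued.v (aeval x (Polynomial.hasseDeriv i f)))
          (Valued.v (aeval y (Polynomial.hasseDeriv i f)
            - aeval x (Polynomial.hasseDeriv i f))) := Valuation.map_add _ _ _
      _ ≤ M := max_le (hMle i hi) (le_trans (le_of_lt hy) hM1)
  -- extract a witness in the range
  have hcl : ClusterPt x (Filter.principal (Set.range (algebraMap K Kb))) :=
    mem_closure_iff_clusterPt.mp hx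
  haveI : (nhds x ⊓ Filter.principal (Set.range (algebraMap K Kb))).NeBot := hcl
  have evS : ∀ᶠ y in nhds x ⊓ Filter.principal (Set.range (algebraMap K Kb)),
      y ∈ Set.range (algebraMap K Kb) :=
    eventually_inf_principal.mpr (Filter.Eventually.of_forall fun y hy => hy)
  obtain ⟨y, ⟨⟨h1, h2, h3⟩, hyS⟩⟩ :=
    ((((ev1.and (ev2.and ev3))).filter_mono inf_le_left).and evS).exists
  obtain ⟨a, rfl⟩ := hyS
  -- transfer to K
  have key_eq : ∀ p : K[X],
      Valued.v (aeval (algebraMap K Kb a) p) = ι (Valued.v (p.eval a)) := by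
    intro p
    rw [aeval_algebraMap_apply_eq_algebraMap_eval, hext]
  set e : ℕ → K := fun i => (Polynomial.hasseDeriv i f).eval a with he_def
  have he : ∀ i, e i = (Polynomial.taylor a f).coeff i := by
    intro i
    rw [Polynomial.taylor_coeff]
  have he0eq : e 0 = f.eval a := by rw [he_def]; simp [Polynomial.hasseDeriv_zero']
  have he1eq : e 1 = (derivative f).eval a := by rw [he_def]; simp [Polynomial.hasseDeriv_one']
  have he0 : e 0 ≠ 0 := by
    rw [he0eq]
    exact hnoroot a
  have hve1 : ι (Valued.v (e 1)) = γ := by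
    rw [he1eq, ← key_eq, h2]
  have he1 : e 1 ≠ 0 := by
    intro h0
    rw [h0] at hve1
    simp only [map_zero] at hve1
    exact hγ hve1.symm
  -- the valuation-theoretic smallness conditions
  have hd : ∀ i, 2 ≤ i → i ≤ f.natDegree →
      Valued.v (e i * e 1 ^ (i - 2) * (e 0 / e 1 ^ 2) ^ (i - 1)) < 1 := by
    intro i hi2 hin
    rw [← hι.lt_iff_lt, map_one]
    have exp : ι (Valued.v (e i * e 1 ^ (i - 2) * (e 0 / e 1 ^ 2) ^ (i - 1)))
        = ι (Valued.v (e i)) * (ι (Valued.v (e 1))) ^ (i - 2)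
          * (ι (Valued.v (e 0)) / (ι (Valued.v (e 1))) ^ 2) ^ (i - 1) := by
      rw [Valuation.map_mul, Valuation.map_mul, Valuation.map_pow, Valuation.map_pow,
        Valuation.map_div, Valuation.map_pow, map_mul, map_mul, map_pow, map_pow,
        map_div₀, map_pow]
    rw [exp, hve1]
    set u : Γ₀' := ι (Valued.v (e 0)) / γ ^ 2 with hu_def
    have hγ2 : (γ ^ 2 : Γ₀') ≠ 0 := pow_ne_zero _ hγ
    have hEi : ι (Valued.v (e i)) ≤ M := by
      rw [he_def, ← key_eq]
      exact h3 i (Finset.mem_range.mpr (by omega))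
    have hE0 : ι (Valued.v (e 0)) < ε := by
      rw [he0eq, ← key_eq]
      exact h1
    have hu : u < (M * Cb)⁻¹ := by
      have h' : (γ ^ 2)⁻¹ * ι (Valued.v (e 0)) < (γ ^ 2)⁻¹ * ε :=
        mul_lt_mul_of_pos_left hE0 (zero_lt_iff.mpr (inv_ne_zero hγ2))
      rw [hu_def, div_eq_mul_inv, mul_comm]
      calc (γ ^ 2)⁻¹ * ι (Valued.v (e 0)) < (γ ^ 2)⁻¹ * ε := h'
      _ = (M * Cb)⁻¹ := by rw [hε_def, ← mul_assoc, inv_mul_cancel₀ hγ2, one_mul]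
    have hMCu : M * Cb * u < 1 := by
      have h' : (M * Cb) * u < (M * Cb) * (M * Cb)⁻¹ :=
        mul_lt_mul_of_pos_left hu (zero_lt_iff.mpr hMC0)
      rwa [mul_inv_cancel₀ hMC0] at h'
    have hu1 : u < 1 := lt_of_le_of_lt (le_mul_of_one_le_left'
      (le_trans (le_trans hM1 (le_mul_of_one_le_right' hCb1)) (le_refl _))) hMCu
    have hpowu : u ^ (i - 1) ≤ u := by
      have h12 : i - 1 = (i - 2) + 1 := by omega
      rw [h12, pow_succ]
      calc u ^ (i - 2) * u ≤ 1 * u := mul_le_mul_left (pow_le_one' (le_of_lt hu1) _) u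
      _ = u := one_mul u
    have hpowγ : γ ^ (i - 2) ≤ Cb := by
      calc γ ^ (i - 2) ≤ (1 ⊔ γ) ^ (i - 2) := pow_le_pow_left' le_sup_right _
      _ ≤ (1 ⊔ γ) ^ n := pow_le_pow_right' le_sup_left (by omega)
    calc ι (Valued.v (e i)) * γ ^ (i - 2) * u ^ (i - 1)
        ≤ M * Cb * u := mul_le_mul' (mul_le_mul' hEi hpowγ) hpowu
      _ < 1 := hMCu
  obtain ⟨b, hb⟩ := key_newton f hn a e he he0 he1 hd
  exact hnoroot b hb
end Main


/-- A Henselian valued field `K` of equicharacteristic zero is a closed subset of its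
algebraic closure `K̄`, equipped with an extension of the valuation, in the valuation
topology. -/
theorem henselian_valued_field_closed_in_algebraic_closure
    {K : Type*} [Field K] {Γ₀ Γ₀' : Type*}
    [LinearOrderedCommGroupWithZero Γ₀] [LinearOrderedCommGroupWithZero Γ₀']
    [Valued K Γ₀]
    [HenselianLocalRing ↥((Valued.v : Valuation K Γ₀).valuationSubring)]
    [CharZero K]
    [CharZero (IsLocalRing.ResidueField ↥((Valued.v : Valuation K Γ₀).valuationSubring))]
    [Valued (AlgebraicClosure K) Γ₀']
    (ι : Γ₀ →*₀ Γ₀') (hι : StrictMono ι)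
    (hext : ∀ x : K,
      Valued.v (algebraMap K (AlgebraicClosure K) x) = ι (Valued.v x)) :
    IsClosed (Set.range (algebraMap K (AlgebraicClosure K))) :=
  henselian_valued_field_closed_in_algebraic_closure' ι hι hext
end
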